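/- arXiv:1709.10081 — 11 statements merged into one kernel-verified Lean document; each statement's English description precedes it below -/
import Mathlib

section
/- Let A be an n×n complex matrix having a zero cross at each of the distinct positions z_1,…,z_m, let t_1,…,t_m ∈ [0,1], and let k ∈ {1,…,n} \ {z_1,…,z_m}. Set B = u_{(k z_m)}(t_m) ⋯ u_{(k z_1)}(t_1) · A · u_{(k z_1)}(t_1)* ⋯ u_{(k z_m)}(t_m)*. Then: (1) if i and j are both not in {k, z_1,…,z_m}, then B_{i,j} = A_{i,j}; (2) if i ∈ {k, z_1,…,z_m} and j ∉ {k, z_1,…,z_m}, then B_{i,j} ≠ 0 only if A_{k,j} ≠ 0; (3) if j ∈ {k, z_1,…,z_m} and i ∉ {k, z_1,…,z_m}, then B_{i,j} ≠ 0 only if A_{i,k} ≠ 0. -/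
open Matrix

/-- `A` has a zero cross at position `k`: row `k` and column `k` vanish. -/
def HasZeroCross {n : ℕ} (A : Matrix (Fin n) (Fin n) ℂ) (k : Fin n) : Prop :=
  (∀ j, A k j = 0) ∧ (∀ i, A i k = 0)

/-- Let `A` be an `n×n` complex matrix having a zero cross at each of the
distinct positions `z 0, …, z (m-1)`, let `t l ∈ [0,1]`, and let `k` be an index not among
the `z l`.  Set `B = u (k, z (m-1)) (t (m-1)) ⋯ u (k, z 0) (t 0) ⬝ A ⬝ (…)ᴴ`.
Then (1) entries with both indices outside `{k, z 0, …, z (m-1)}` are unchanged;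
(2) if `i` is in that set and `j` is not, then `B i j ≠ 0` only if `A k j ≠ 0`;
(3) symmetrically in columns. -/
theorem zero_cross_conjugation_entries {n m : ℕ}
    (u : Fin n → Fin n → ℝ → Matrix (Fin n) (Fin n) ℂ)
    (hu_unitary : ∀ a b : Fin n, a ≠ b → ∀ t ∈ Set.Icc (0 : ℝ) 1,
      u a b t ∈ Matrix.unitaryGroup (Fin n) ℂ)
    (hu_zero : ∀ a b : Fin n, a ≠ b → u a b 0 = 1)
    (hu_one : ∀ a b : Fin n, a ≠ b → u a b 1 = (Equiv.swap a b).permMatrix ℂ)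
    (hu_delta : ∀ a b : Fin n, a ≠ b → ∀ t ∈ Set.Icc (0 : ℝ) 1, ∀ i j : Fin n,
      ((i ≠ a ∧ i ≠ b) ∨ (j ≠ a ∧ j ≠ b)) → u a b t i j = if i = j then 1 else 0)
    (A : Matrix (Fin n) (Fin n) ℂ)
    (z : Fin m → Fin n) (hz : Function.Injective z)
    (hA : ∀ l, HasZeroCross A (z l))
    (t : Fin m → ℝ) (ht : ∀ l, t l ∈ Set.Icc (0 : ℝ) 1)
    (k : Fin n) (hk : ∀ l, k ≠ z l)
    (B : Matrix (Fin n) (Fin n) ℂ)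
    (hB : B = (List.ofFn fun l : Fin m => u k (z l) (t l)).reverse.prod * A *
      ((List.ofFn fun l : Fin m => u k (z l) (t l)).reverse.prod)ᴴ) :
    (∀ i j : Fin n, (i ≠ k ∧ ∀ l, i ≠ z l) → (j ≠ k ∧ ∀ l, j ≠ z l) → B i j = A i j) ∧
    (∀ i j : Fin n, (i = k ∨ ∃ l, i = z l) → (j ≠ k ∧ ∀ l, j ≠ z l) →
      B i j ≠ 0 → A k j ≠ 0) ∧
    (∀ i j : Fin n, (j = k ∨ ∃ l, j = z l) → (i ≠ k ∧ ∀ l, i ≠ z l) →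
      B i j ≠ 0 → A i k ≠ 0) := by
  classical
  set S : Fin n → Prop := fun i => i = k ∨ ∃ l, i = z l with hS
  set P : Matrix (Fin n) (Fin n) ℂ :=
    (List.ofFn fun l : Fin m => u k (z l) (t l)).reverse.prod with hP
  -- the key invariant: products of matrices that are identity off S are identity off S
  have key : ∀ L : List (Matrix (Fin n) (Fin n) ℂ),
      (∀ M ∈ L, ∀ i j : Fin n, (¬ S i ∨ ¬ S j) → M i j = if i = j then 1 else 0) →
      ∀ i j : Fin n, (¬ S i ∨ ¬ S j) → L.prod i j = if i = j then 1 else 0 := by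
    intro L
    induction L with
    | nil => intro _ i j _; simp [Matrix.one_apply]
    | cons M L ih =>
      intro hL i j hij
      have hM := hL M List.mem_cons_self
      have hPr := ih (fun N hN => hL N (List.mem_cons_of_mem _ hN))
      rw [List.prod_cons, Matrix.mul_apply]
      rcases hij with hi | hj
      · have h1 : ∀ p, M i p = if i = p then 1 else 0 := fun p => hM i p (Or.inl hi)
        simp only [h1, ite_mul, one_mul, zero_mul]
        rw [Finset.sum_ite_eq]
        simp [hPr i j (Or.inl hi)]
      · have h1 : ∀ p, L.prod p j = if p = j then 1 else 0 := fun p => hPr p j (Or.inr hj)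
        simp only [h1, mul_ite, mul_one, mul_zero]
        rw [Finset.sum_ite_eq']
        simp [hM i j (Or.inr hj)]
  have hQ : ∀ i j : Fin n, (¬ S i ∨ ¬ S j) → P i j = if i = j then 1 else 0 := by
    apply key
    intro M hM
    rw [List.mem_reverse] at hM
    obtain ⟨l, rfl⟩ := List.mem_ofFn.1 hM
    intro i j hij
    apply hu_delta k (z l) (hk l) (t l) (ht l)
    rcases hij with hi | hj
    · exact Or.inl ⟨fun h => hi (Or.inl h), fun h => hi (Or.inr ⟨l, h⟩)⟩
    · exact Or.inr ⟨fun h => hj (Or.inl h), fun h => hj (Or.inr ⟨l, h⟩)⟩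
  -- multiplying by P on the left fixes rows outside S
  have hleft : ∀ (X : Matrix (Fin n) (Fin n) ℂ) (i j : Fin n), ¬ S i →
      (P * X) i j = X i j := by
    intro X i j hi
    rw [Matrix.mul_apply]
    have h1 : ∀ p, P i p = if i = p then 1 else 0 := fun p => hQ i p (Or.inl hi)
    simp only [h1, ite_mul, one_mul, zero_mul]
    rw [Finset.sum_ite_eq]
    simp
  -- multiplying by Pᴴ on the right fixes columns outside S
  have hright : ∀ (X : Matrix (Fin n) (Fin n) ℂ) (i j : Fin n), ¬ S j →
      (X * Pᴴ) i j = X i j := by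
    intro X i j hj
    rw [Matrix.mul_apply]
    have h1 : ∀ q, (Pᴴ) q j = if q = j then 1 else 0 := by
      intro q
      rw [Matrix.conjTranspose_apply, hQ j q (Or.inl hj)]
      rcases eq_or_ne q j with h | h
      · simp [h]
      · simp [h, Ne.symm h]
    simp only [h1, mul_ite, mul_one, mul_zero]
    rw [Finset.sum_ite_eq']
    simp
  have notS : ∀ i : Fin n, (i ≠ k ∧ ∀ l, i ≠ z l) → ¬ S i := by
    rintro i ⟨h1, h2⟩ (h | ⟨l, h⟩)
    · exact h1 h
    · exact h2 l h
  refine ⟨?_, ?_, ?_⟩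
  · intro i j hi hj
    rw [hB, hright _ _ _ (notS j hj), hleft _ _ _ (notS i hi)]
  · intro i j hi hj hBne
    rw [hB, hright _ _ _ (notS j hj), Matrix.mul_apply] at hBne
    obtain ⟨p, _, hp⟩ := Finset.exists_ne_zero_of_sum_ne_zero hBne
    have hPp : P i p ≠ 0 := fun h => hp (by rw [h, zero_mul])
    have hAp : A p j ≠ 0 := fun h => hp (by rw [h, mul_zero])
    have hSp : S p := by
      by_contra hns
      apply hPp
      rw [hQ i p (Or.inr hns)]
      have : i ≠ p := fun h => hns (h ▸ hi)
      simp [this]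
    rcases hSp with rfl | ⟨l, rfl⟩
    · exact hAp
    · exact absurd ((hA l).1 j) hAp
  · intro i j hj hi hBne
    rw [hB, mul_assoc, hleft _ _ _ (notS i hi), Matrix.mul_apply] at hBne
    obtain ⟨q, _, hq⟩ := Finset.exists_ne_zero_of_sum_ne_zero hBne
    have hAq : A i q ≠ 0 := fun h => hq (by rw [h, zero_mul])
    have hPq : P j q ≠ 0 := by
      intro h
      apply hq
      rw [Matrix.conjTranspose_apply, h, star_zero, mul_zero]
    have hSq : S q := by
      by_contra hns
      apply hPq
      rw [hQ j q (Or.inr hns)]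
      have : j ≠ q := fun h => hns (h ▸ hj)
      simp [this]
    rcases hSq with rfl | ⟨l, rfl⟩
    · exact hAq
    · exact absurd ((hA l).2 i) hAq
end

section
/- Let A be an n×n complex matrix having a zero cross at each of the distinct positions z_1,…,z_m, let t_1,…,t_m ∈ [0,1], and let k ∈ {1,…,n} \ {z_1,…,z_m}. Set B = u_{(k z_m)}(t_m) ⋯ u_{(k z_1)}(t_1) · A · u_{(k z_1)}(t_1)* ⋯ u_{(k z_m)}(t_m)*. If at least one of t_1,…,t_m equals 1, then B has a zero cross at position k. -/
open Matrix

lemma row_support_aux {n : ℕ}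
    (u : Fin n → Fin n → ℝ → Matrix (Fin n) (Fin n) ℂ)
    (hu_one : ∀ a b : Fin n, a ≠ b → u a b 1 = (Equiv.swap a b).permMatrix ℂ)
    (hu_delta : ∀ a b : Fin n, a ≠ b → ∀ t ∈ Set.Icc (0 : ℝ) 1, ∀ i j : Fin n,
      ((i ≠ a ∧ i ≠ b) ∨ (j ≠ a ∧ j ≠ b)) → u a b t i j = if i = j then 1 else 0)
    (k : Fin n) :
    ∀ m (z : Fin m → Fin n) (hz : Function.Injective z)
      (t : Fin m → ℝ) (ht : ∀ l, t l ∈ Set.Icc (0 : ℝ) 1)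
      (hk : ∀ l, k ≠ z l),
      (∀ i, i ≠ k → (∀ l, i ≠ z l) →
        ((List.ofFn fun l : Fin m => u k (z l) (t l)).reverse.prod) k i = 0) ∧
      ((∃ l, t l = 1) →
        ((List.ofFn fun l : Fin m => u k (z l) (t l)).reverse.prod) k k = 0) := by
  intro m
  induction m with
  | zero =>
    intro z hz t ht hk
    refine ⟨fun i hik _ => ?_, fun ⟨l, _⟩ => absurd l.pos (by simp)⟩
    simp [Matrix.one_apply, Ne.symm hik]
  | succ m IH =>
    intro z hz t ht hk
    have hz' : Function.Injective (z ∘ Fin.succ) :=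
      hz.comp (Fin.succ_injective m)
    obtain ⟨IHa, IHb⟩ := IH (z ∘ Fin.succ) hz' (t ∘ Fin.succ)
      (fun l => ht l.succ) (fun l => hk l.succ)
    simp only [Function.comp] at IHa IHb
    set Q := (List.ofFn fun l : Fin m => u k (z l.succ) (t l.succ)).reverse.prod with hQ
    have hsplit : (List.ofFn fun l : Fin (m+1) => u k (z l) (t l)).reverse.prod
        = Q * u k (z 0) (t 0) := by
      rw [List.ofFn_succ, List.reverse_cons, List.prod_append, List.prod_singleton]
    have hkz0 : k ≠ z 0 := hk 0
    -- row support for Q at z 0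
    have hQz0 : Q k (z 0) = 0 := by
      refine IHa (z 0) (Ne.symm hkz0) fun l => ?_
      exact fun h => (Fin.succ_ne_zero l) (hz h.symm)
    constructor
    · intro i hik hiz
      rw [hsplit, Matrix.mul_apply]
      refine Finset.sum_eq_zero fun j _ => ?_
      by_cases hjk : j = k
      · have : u k (z 0) (t 0) k i = if k = i then 1 else 0 :=
          hu_delta k (z 0) hkz0 (t 0) (ht 0) k i (Or.inr ⟨hik, hiz 0⟩)
        rw [hjk, this, if_neg (Ne.symm hik), mul_zero]
      · by_cases hjz : ∀ l : Fin m, j ≠ z l.succ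
        · by_cases hj0 : j = z 0
          · rw [hj0, hQz0, zero_mul]
          · rw [IHa j hjk hjz, zero_mul]
        · push_neg at hjz
          obtain ⟨l, hl⟩ := hjz
          have hju : u k (z 0) (t 0) j i = if j = i then 1 else 0 := by
            refine hu_delta k (z 0) hkz0 (t 0) (ht 0) j i (Or.inl ⟨hjk, ?_⟩)
            rw [hl]; exact fun h => (Fin.succ_ne_zero l) (hz h)
          rw [hju, if_neg (by rw [hl]; exact fun h => (hiz l.succ) h.symm), mul_zero]
    · rintro ⟨l, hl⟩
      rw [hsplit, Matrix.mul_apply]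
      have hsum : ∀ j ∈ Finset.univ, j ≠ k → Q k j * u k (z 0) (t 0) j k = 0 := by
        intro j _ hjk
        by_cases hjz : ∀ l : Fin m, j ≠ z l.succ
        · by_cases hj0 : j = z 0
          · rw [hj0, hQz0, zero_mul]
          · rw [IHa j hjk hjz, zero_mul]
        · push_neg at hjz
          obtain ⟨l', hl'⟩ := hjz
          have hju : u k (z 0) (t 0) j k = if j = k then 1 else 0 := by
            refine hu_delta k (z 0) hkz0 (t 0) (ht 0) j k (Or.inl ⟨hjk, ?_⟩)
            rw [hl']; exact fun h => (Fin.succ_ne_zero l') (hz h)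
          rw [hju, if_neg hjk, mul_zero]
      rw [Finset.sum_eq_single k (fun j hj hjk => hsum j hj hjk) (by simp)]
      rcases Fin.eq_zero_or_eq_succ l with h0 | ⟨l', hls⟩
      · subst h0
        rw [hl, hu_one k (z 0) hkz0]
        have : (Equiv.swap k (z 0)).permMatrix ℂ k k = 0 := by
          simp [Equiv.Perm.permMatrix, PEquiv.toMatrix_apply, Equiv.toPEquiv,
            Equiv.swap_apply_left, Ne.symm hkz0]
        rw [this, mul_zero]
      · subst hls
        rw [IHb ⟨l', hl⟩, zero_mul]

/-- Let `A` be an `n×n` complex matrix having a zero cross at each of the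
distinct positions `z 0, …, z (m-1)`, let `t l ∈ [0,1]`, and let `k` be an index not among
the `z l`.  Set `B = u (k, z (m-1)) (t (m-1)) ⋯ u (k, z 0) (t 0) ⬝ A ⬝ (…)ᴴ`.
If at least one of the `t l` equals `1`, then `B` has a zero cross at position `k`. -/
theorem zero_cross_conjugation_creates_cross {n m : ℕ}
    (u : Fin n → Fin n → ℝ → Matrix (Fin n) (Fin n) ℂ)
    (hu_unitary : ∀ a b : Fin n, a ≠ b → ∀ t ∈ Set.Icc (0 : ℝ) 1,
      u a b t ∈ Matrix.unitaryGroup (Fin n) ℂ)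
    (hu_zero : ∀ a b : Fin n, a ≠ b → u a b 0 = 1)
    (hu_one : ∀ a b : Fin n, a ≠ b → u a b 1 = (Equiv.swap a b).permMatrix ℂ)
    (hu_delta : ∀ a b : Fin n, a ≠ b → ∀ t ∈ Set.Icc (0 : ℝ) 1, ∀ i j : Fin n,
      ((i ≠ a ∧ i ≠ b) ∨ (j ≠ a ∧ j ≠ b)) → u a b t i j = if i = j then 1 else 0)
    (A : Matrix (Fin n) (Fin n) ℂ)
    (z : Fin m → Fin n) (hz : Function.Injective z)
    (hA : ∀ l, HasZeroCross A (z l))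
    (t : Fin m → ℝ) (ht : ∀ l, t l ∈ Set.Icc (0 : ℝ) 1)
    (k : Fin n) (hk : ∀ l, k ≠ z l)
    (B : Matrix (Fin n) (Fin n) ℂ)
    (hB : B = (List.ofFn fun l : Fin m => u k (z l) (t l)).reverse.prod * A *
      ((List.ofFn fun l : Fin m => u k (z l) (t l)).reverse.prod)ᴴ)
    (hone : ∃ l, t l = 1) :
    HasZeroCross B k := by
  obtain ⟨Ha, Hb⟩ := row_support_aux u hu_one hu_delta k m z hz t ht hk
  set P := (List.ofFn fun l : Fin m => u k (z l) (t l)).reverse.prod with hP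
  have hrow : ∀ i, (∀ l, i ≠ z l) → P k i = 0 := by
    intro i hi
    rcases eq_or_ne i k with h | h
    · rw [h]; exact Hb hone
    · exact Ha i h hi
  have hPA : ∀ i', (P * A) k i' = 0 := by
    intro i'
    rw [Matrix.mul_apply]
    refine Finset.sum_eq_zero fun i _ => ?_
    by_cases hi : ∀ l, i ≠ z l
    · rw [hrow i hi, zero_mul]
    · push_neg at hi
      obtain ⟨l, hl⟩ := hi
      rw [hl, (hA l).1 i', mul_zero]
  constructor
  · intro j
    rw [hB, Matrix.mul_apply]
    exact Finset.sum_eq_zero fun i' _ => by rw [hPA i', zero_mul]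
  · intro i
    rw [hB, Matrix.mul_apply]
    refine Finset.sum_eq_zero fun j' _ => ?_
    rw [Matrix.conjTranspose_apply]
    by_cases hj : ∀ l, j' ≠ z l
    · rw [hrow j' hj, star_zero, mul_zero]
    · push_neg at hj
      obtain ⟨l, hl⟩ := hj
      have : (P * A) i j' = 0 := by
        rw [Matrix.mul_apply]
        refine Finset.sum_eq_zero fun j _ => ?_
        rw [hl, (hA l).2 j, mul_zero]
      rw [this, zero_mul]
end

section
/- Let A be an n×n complex matrix and Δ ∈ [0,1]^n be such that Δ_i > 0 only if A has a zero cross at position i. Suppose that for some k and some M with M ≤ n − k + 1, there exists i ∈ {k,…,k+M−1} with Δ_i = 1. Set V = u_{(k, k+1)}(Δ_{k+1}) ⋯ u_{(k, k+M−1)}(Δ_{k+M−1}). Then V A V* has a zero cross at position k. -/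
open Matrix

lemma zero_cross_key {n : ℕ}
    (u : Fin n → Fin n → ℝ → Matrix (Fin n) (Fin n) ℂ)
    (hu_zero : ∀ a b : Fin n, a ≠ b → u a b 0 = 1)
    (hu_one : ∀ a b : Fin n, a ≠ b → u a b 1 = (Equiv.swap a b).permMatrix ℂ)
    (hu_delta : ∀ a b : Fin n, a ≠ b → ∀ t ∈ Set.Icc (0 : ℝ) 1, ∀ i j : Fin n,
      ((i ≠ a ∧ i ≠ b) ∨ (j ≠ a ∧ j ≠ b)) → u a b t i j = if i = j then 1 else 0)
    (A : Matrix (Fin n) (Fin n) ℂ)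
    (Δ : Fin n → ℝ) (hΔ01 : ∀ i, Δ i ∈ Set.Icc (0 : ℝ) 1)
    (hΔcross : ∀ i, 0 < Δ i → HasZeroCross A i)
    (k : Fin n) :
    ∀ (m : ℕ) (c : Fin m → Fin n), (∀ a : Fin m, (c a : ℕ) = (k : ℕ) + 1 + (a : ℕ)) →
    (∀ p, p ≠ k → (List.ofFn fun a => u k (c a) (Δ (c a))).prod k p ≠ 0 → HasZeroCross A p) ∧
    ((∃ a, Δ (c a) = 1) → (List.ofFn fun a => u k (c a) (Δ (c a))).prod k k = 0) ∧
    (∀ p : Fin n, (k : ℕ) + m < (p : ℕ) → (List.ofFn fun a => u k (c a) (Δ (c a))).prod k p = 0) := by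
  intro m
  induction m with
  | zero =>
    intro c hc
    refine ⟨?_, ?_, ?_⟩
    · intro p hpk hne
      exact absurd (by simp [Matrix.one_apply, Ne.symm hpk]) hne
    · rintro ⟨a, -⟩; exact absurd a.isLt (by omega)
    · intro p hp
      have hpk : p ≠ k := by intro h; subst h; omega
      simp [Matrix.one_apply, Ne.symm hpk]
  | succ m ih =>
    intro c hc
    set b := c (Fin.last m) with hbdef
    have hb : (b : ℕ) = (k : ℕ) + 1 + m := hc (Fin.last m)
    have hkb : k ≠ b := by intro h; rw [← h] at hb; omega
    obtain ⟨ih1, ih2, ih3⟩ := ih (fun a => c a.castSucc) (fun a => hc a.castSucc)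
    set Q := (List.ofFn fun a : Fin m => u k (c a.castSucc) (Δ (c a.castSucc))).prod with hQdef
    have hprod : (List.ofFn fun a : Fin (m+1) => u k (c a) (Δ (c a))).prod
        = Q * u k b (Δ b) := by
      rw [List.ofFn_succ', List.prod_concat]
    have hQb : Q k b = 0 := ih3 b (by omega)
    have ht : Δ b ∈ Set.Icc (0:ℝ) 1 := hΔ01 b
    have hP : ∀ p, (Q * u k b (Δ b)) k p =
        if p = k ∨ p = b then Q k k * u k b (Δ b) k p else Q k p := by
      intro p
      rw [Matrix.mul_apply]
      split
      · next h =>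
        apply Finset.sum_eq_single k
        · intro q _ hq
          by_cases hqb : q = b
          · subst hqb; rw [hQb, zero_mul]
          · have hd := hu_delta k b hkb (Δ b) ht q p (Or.inl ⟨hq, hqb⟩)
            rw [hd, if_neg, mul_zero]
            rcases h with h | h <;> (subst h; intro hqp)
            · exact hq hqp
            · exact hqb hqp
        · intro h; exact absurd (Finset.mem_univ k) h
      · next h =>
        push_neg at h
        have hsum : ∑ q, Q k q * u k b (Δ b) q p = Q k p * u k b (Δ b) p p := by
          apply Finset.sum_eq_single p
          · intro q _ hq
            have hd := hu_delta k b hkb (Δ b) ht q p (Or.inr ⟨h.1, h.2⟩)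
            rw [hd, if_neg hq, mul_zero]
          · intro hh; exact absurd (Finset.mem_univ p) hh
        rw [hsum, hu_delta k b hkb (Δ b) ht p p (Or.inr ⟨h.1, h.2⟩), if_pos rfl, mul_one]
    rw [hprod]
    refine ⟨?_, ?_, ?_⟩
    · intro p hpk hne
      rw [hP] at hne
      by_cases hpb : p = b
      · rw [if_pos (Or.inr hpb), hpb] at hne
        have hu : u k b (Δ b) k b ≠ 0 := fun h => hne (by rw [h, mul_zero])
        have hΔp : Δ b ≠ 0 := by
          intro h
          rw [h, hu_zero k b hkb] at hu
          exact hu (by simp [Matrix.one_apply, hkb])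
        rw [hpb]
        exact hΔcross b (lt_of_le_of_ne ht.1 (Ne.symm hΔp))
      · rw [if_neg (by tauto)] at hne
        exact ih1 p hpk hne
    · rintro ⟨a, ha⟩
      rw [hP, if_pos (Or.inl rfl)]
      by_cases hal : a = Fin.last m
      · subst hal
        rw [← hbdef] at ha
        rw [ha, hu_one k b hkb]
        have : (Equiv.swap k b).permMatrix ℂ k k = 0 := by
          simp [Equiv.Perm.permMatrix, PEquiv.toMatrix_apply, Equiv.toPEquiv_apply,
            Equiv.swap_apply_left, hkb, Ne.symm hkb]
        rw [this, mul_zero]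
      · obtain ⟨a', rfl⟩ := Fin.exists_castSucc_eq.mpr hal
        rw [ih2 ⟨a', ha⟩, zero_mul]
    · intro p hp
      have hpk : p ≠ k := by intro h; subst h; omega
      have hpb : p ≠ b := by intro h; subst h; omega
      rw [hP, if_neg (by tauto)]
      exact ih3 p (by omega)

/-- Let `A` be an `n×n` complex matrix and `Δ ∈ [0,1]^n` with `Δ i > 0` only
if `A` has a zero cross at position `i`.  Suppose for some position `k` and some `M` with
`k + M ≤ n` (i.e. the window `{k, …, k+M-1}` fits, `M ≤ n - k + 1` in 1-based indexing)
there is `i ∈ {k, …, k+M-1}` with `Δ i = 1`.  Set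
`V = u (k, k+1) (Δ (k+1)) ⋯ u (k, k+M-1) (Δ (k+M-1))`.
Then `V ⬝ A ⬝ Vᴴ` has a zero cross at position `k`. -/
theorem zero_cross_block_one {n : ℕ}
    (u : Fin n → Fin n → ℝ → Matrix (Fin n) (Fin n) ℂ)
    (hu_unitary : ∀ a b : Fin n, a ≠ b → ∀ t ∈ Set.Icc (0 : ℝ) 1,
      u a b t ∈ Matrix.unitaryGroup (Fin n) ℂ)
    (hu_zero : ∀ a b : Fin n, a ≠ b → u a b 0 = 1)
    (hu_one : ∀ a b : Fin n, a ≠ b → u a b 1 = (Equiv.swap a b).permMatrix ℂ)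
    (hu_delta : ∀ a b : Fin n, a ≠ b → ∀ t ∈ Set.Icc (0 : ℝ) 1, ∀ i j : Fin n,
      ((i ≠ a ∧ i ≠ b) ∨ (j ≠ a ∧ j ≠ b)) → u a b t i j = if i = j then 1 else 0)
    (A : Matrix (Fin n) (Fin n) ℂ)
    (Δ : Fin n → ℝ) (hΔ01 : ∀ i, Δ i ∈ Set.Icc (0 : ℝ) 1)
    (hΔcross : ∀ i, 0 < Δ i → HasZeroCross A i)
    (k : Fin n) (M : ℕ) (hkM : (k : ℕ) + M ≤ n)
    (hex : ∃ i : Fin n, (k : ℕ) ≤ (i : ℕ) ∧ (i : ℕ) < (k : ℕ) + M ∧ Δ i = 1)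
    (V : Matrix (Fin n) (Fin n) ℂ)
    (hV : V = (List.ofFn fun a : Fin (M - 1) =>
      u k ⟨(k : ℕ) + 1 + (a : ℕ), by have := a.isLt; omega⟩
        (Δ ⟨(k : ℕ) + 1 + (a : ℕ), by have := a.isLt; omega⟩)).prod) :
    HasZeroCross (V * A * Vᴴ) k := by
  obtain ⟨h1, h2, h3⟩ := zero_cross_key u hu_zero hu_one hu_delta A Δ hΔ01 hΔcross k
    (M - 1) (fun a : Fin (M - 1) => ⟨(k : ℕ) + 1 + (a : ℕ), by have := a.isLt; omega⟩)
    (fun a => rfl)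
  rw [← hV] at h1 h2 h3
  have hrow : ∀ p, V k p ≠ 0 → HasZeroCross A p := by
    obtain ⟨i, hik, hiM, hΔi⟩ := hex
    by_cases hik' : (i : ℕ) = (k : ℕ)
    · have hik2 : i = k := Fin.ext hik'
      intro p hp
      by_cases hpk : p = k
      · subst hpk
        exact hΔcross p (by rw [← hik2, hΔi]; norm_num)
      · exact h1 p hpk hp
    · have hki : (k : ℕ) < (i : ℕ) := lt_of_le_of_ne hik (Ne.symm hik')
      have hkk : V k k = 0 := by
        apply h2
        refine ⟨⟨(i : ℕ) - (k : ℕ) - 1, by omega⟩, ?_⟩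
        have heq : (⟨(k : ℕ) + 1 + ((i : ℕ) - (k : ℕ) - 1), by omega⟩ : Fin n) = i :=
          Fin.ext (by simp; omega)
        rw [heq]; exact hΔi
      intro p hp
      have hpk : p ≠ k := by rintro rfl; exact hp hkk
      exact h1 p hpk hp
  constructor
  · intro j
    rw [mul_assoc, Matrix.mul_apply]
    apply Finset.sum_eq_zero
    intro p _
    by_cases h : V k p = 0
    · rw [h, zero_mul]
    · have hc := hrow p h
      have hz : (A * Vᴴ) p j = 0 := by
        rw [Matrix.mul_apply]
        apply Finset.sum_eq_zero
        intro q _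
        rw [hc.1 q, zero_mul]
      rw [hz, mul_zero]
  · intro i
    rw [Matrix.mul_apply]
    apply Finset.sum_eq_zero
    intro q _
    by_cases h : V k q = 0
    · have hz : Vᴴ q k = 0 := by simp [Matrix.conjTranspose_apply, h]
      rw [hz, mul_zero]
    · have hc := hrow q h
      have hz : (V * A) i q = 0 := by
        rw [Matrix.mul_apply]
        apply Finset.sum_eq_zero
        intro p _
        rw [hc.2 p, mul_zero]
      rw [hz, zero_mul]
end

section
/- Let A be an n×n complex matrix and Δ ∈ [0,1]^n be such that Δ_i > 0 only if A has a zero cross at position i. Let M ∈ ℕ and let k_1 < k_2 < ⋯ < k_N be positions with k_{j+1} − k_j ≥ M for all j and k_N ≤ n − M + 1, and suppose that for each j ∈ {1,…,N} there exists i ∈ {k_j,…,k_j+M−1} with Δ_i = 1. For each j set V_j = u_{(k_j, k_j+1)}(Δ_{k_j+1}) ⋯ u_{(k_j, k_j+M−1)}(Δ_{k_j+M−1}), and set A(N) = V_N ⋯ V_1 A V_1* ⋯ V_N*. Then A(N) has zero crosses at positions k_1, …, k_N. -/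
open Matrix

lemma rowId_prod {n : ℕ} (c : Fin n) (L : List (Matrix (Fin n) (Fin n) ℂ))
    (h : ∀ Y ∈ L, ∀ r, Y c r = if c = r then 1 else 0) :
    ∀ r, L.prod c r = if c = r then 1 else 0 := by
  induction L with
  | nil => intro r; simp [Matrix.one_apply]
  | cons X T ih =>
    intro r
    rw [List.prod_cons, Matrix.mul_apply]
    have hX := h X List.mem_cons_self
    have ihT := ih (fun Y hY => h Y (List.mem_cons_of_mem _ hY))
    calc ∑ s, X c s * T.prod s r = ∑ s, (if c = s then 1 else 0) * T.prod s r := by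
          simp_rw [hX]
      _ = T.prod c r := by simp
      _ = _ := ihT r

lemma mul_row_id {n : ℕ} (c : Fin n) (T R : Matrix (Fin n) (Fin n) ℂ)
    (h : ∀ s, T c s = if c = s then 1 else 0) (r : Fin n) :
    (T * R) c r = R c r := by
  rw [Matrix.mul_apply]
  calc ∑ s, T c s * R s r = ∑ s, (if c = s then 1 else 0) * R s r := by simp_rw [h]
    _ = R c r := by simp

lemma row_mul_prod {n : ℕ} (c : Fin n) (X : Matrix (Fin n) (Fin n) ℂ)
    (W : Fin n → Prop)
    (hsupp : ∀ s, X c s ≠ 0 → W s)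
    (L : List (Matrix (Fin n) (Fin n) ℂ))
    (hL : ∀ Y ∈ L, ∀ s, W s → ∀ r, Y s r = if s = r then 1 else 0) :
    ∀ r, (X * L.prod) c r = X c r := by
  intro r
  rw [Matrix.mul_apply]
  have key : ∀ s, X c s * L.prod s r = X c s * (if s = r then 1 else 0) := by
    intro s
    by_cases hx : X c s = 0
    · rw [hx, zero_mul, zero_mul]
    · rw [rowId_prod s L (fun Y hY => hL Y hY s (hsupp s hx)) r]
  calc ∑ s, X c s * L.prod s r = ∑ s, X c s * (if s = r then 1 else 0) := by simp_rw [key]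
    _ = X c r := by simp

lemma window_row {n M' : ℕ} (c : Fin n)
    (f : Fin M' → Matrix (Fin n) (Fin n) ℂ)
    (p : Fin M' → Fin n) (hp : ∀ a, (p a : ℕ) = (c : ℕ) + 1 + (a : ℕ))
    (cross : Fin n → Prop) (g : Fin M' → Prop)
    (hdelta : ∀ a, ∀ i r : Fin n, ((i ≠ c ∧ i ≠ p a) ∨ (r ≠ c ∧ r ≠ p a)) →
      f a i r = if i = r then 1 else 0)
    (hne : ∀ a, f a c (p a) ≠ 0 → cross (p a))
    (hcc : ∀ a, g a → f a c c = 0) :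
    (∀ r, (List.ofFn f).prod c r ≠ 0 →
      r = c ∨ ((c : ℕ) < (r : ℕ) ∧ (r : ℕ) < (c : ℕ) + 1 + M' ∧ cross r)) ∧
    ((∃ b, g b) → (List.ofFn f).prod c c = 0) := by
  have hlen : (List.ofFn f).length = M' := List.length_ofFn
  have key : ∀ a : ℕ, a ≤ M' →
      (∀ r, ((List.ofFn f).take a).prod c r ≠ 0 →
        r = c ∨ ((c : ℕ) < (r : ℕ) ∧ (r : ℕ) < (c : ℕ) + 1 + a ∧ cross r)) ∧
      ((∃ b : Fin M', (b : ℕ) < a ∧ g b) → ((List.ofFn f).take a).prod c c = 0) := by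
    intro a
    induction a with
    | zero =>
      intro _
      refine ⟨fun r hr => ?_, fun ⟨b, hb, _⟩ => absurd hb (by omega)⟩
      simp only [List.take_zero, List.prod_nil] at hr
      left
      by_contra h
      exact hr (Matrix.one_apply_ne' h)
    | succ a ih =>
      intro ha
      have haM : a < M' := ha
      have halen : a < (List.ofFn f).length := by rw [hlen]; omega
      obtain ⟨ih1, ih2⟩ := ih (Nat.le_of_succ_le ha)
      have hstep : ((List.ofFn f).take (a + 1)).prod =
          ((List.ofFn f).take a).prod * f ⟨a, haM⟩ := by
        rw [List.prod_take_succ _ _ halen]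
        congr 1
        simp
      have hpa : (p ⟨a, haM⟩ : ℕ) = (c : ℕ) + 1 + a := hp ⟨a, haM⟩
      constructor
      · intro r hr
        rw [hstep, Matrix.mul_apply] at hr
        obtain ⟨s, -, hs⟩ := Finset.exists_ne_zero_of_sum_ne_zero hr
        have hQs := left_ne_zero_of_mul hs
        have hXs := right_ne_zero_of_mul hs
        rcases ih1 s hQs with hsc | ⟨hs1, hs2, hcrs⟩
        · rw [hsc] at hXs
          by_cases hrc : r = c
          · exact Or.inl hrc
          by_cases hrp : r = p ⟨a, haM⟩
          · rw [hrp] at hXs ⊢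
            exact Or.inr ⟨by omega, by omega, hne _ hXs⟩
          · exfalso
            rw [hdelta ⟨a, haM⟩ c r (Or.inr ⟨hrc, hrp⟩)] at hXs
            exact hXs (if_neg (fun h => hrc h.symm))
        · have hsc : s ≠ c := fun h => by rw [h] at hs1; omega
          have hsp : s ≠ p ⟨a, haM⟩ := fun h => by rw [h] at hs2; omega
          rw [hdelta ⟨a, haM⟩ s r (Or.inl ⟨hsc, hsp⟩)] at hXs
          have hsr : s = r := by by_contra h; exact hXs (if_neg h)
          rw [hsr] at hs1 hs2 hcrs
          exact Or.inr ⟨hs1, by omega, hcrs⟩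
      · rintro ⟨b, hb, hgb⟩
        rw [hstep, Matrix.mul_apply]
        apply Finset.sum_eq_zero
        intro s _
        by_cases hQs : ((List.ofFn f).take a).prod c s = 0
        · rw [hQs, zero_mul]
        rcases ih1 s hQs with hsc | ⟨hs1, hs2, -⟩
        · by_cases hba : (b : ℕ) < a
          · rw [hsc] at hQs
            exact absurd (ih2 ⟨b, hba, hgb⟩) hQs
          · have hbeq : b = ⟨a, haM⟩ := by
              apply Fin.ext
              show (b : ℕ) = a
              omega
            rw [hbeq] at hgb
            rw [hsc, hcc _ hgb, mul_zero]
        · have hsc : s ≠ c := fun h => by rw [h] at hs1; omega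
          have hsp : s ≠ p ⟨a, haM⟩ := fun h => by rw [h] at hs2; omega
          rw [hdelta ⟨a, haM⟩ s c (Or.inl ⟨hsc, hsp⟩), if_neg hsc, mul_zero]
  have := key M' le_rfl
  rw [List.take_of_length_le (le_of_eq hlen)] at this
  exact ⟨this.1, fun ⟨b, hgb⟩ => this.2 ⟨b, b.isLt, hgb⟩⟩

/-- Let `A` be an `n×n` complex matrix and `Δ ∈ [0,1]^n` with `Δ i > 0` only
if `A` has a zero cross at position `i`.  Let `k 0 < k 1 < ⋯ < k (N-1)` be positions with
consecutive gaps at least `M` and each window `{k j, …, k j + M - 1}` inside `{1,…,n}`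
(`k_N ≤ n − M + 1`), and suppose each window contains an index `i` with `Δ i = 1`.
With `V j = u (k j, k j + 1) (Δ (k j + 1)) ⋯ u (k j, k j + M - 1) (Δ (k j + M - 1))` and
`B = V (N-1) ⋯ V 0 ⬝ A ⬝ (V 0)ᴴ ⋯ (V (N-1))ᴴ`, the matrix `B` has zero crosses at the
positions `k 0, …, k (N-1)`. -/
theorem zero_cross_block_many {n N : ℕ}
    (u : Fin n → Fin n → ℝ → Matrix (Fin n) (Fin n) ℂ)
    (hu_unitary : ∀ a b : Fin n, a ≠ b → ∀ t ∈ Set.Icc (0 : ℝ) 1,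
      u a b t ∈ Matrix.unitaryGroup (Fin n) ℂ)
    (hu_zero : ∀ a b : Fin n, a ≠ b → u a b 0 = 1)
    (hu_one : ∀ a b : Fin n, a ≠ b → u a b 1 = (Equiv.swap a b).permMatrix ℂ)
    (hu_delta : ∀ a b : Fin n, a ≠ b → ∀ t ∈ Set.Icc (0 : ℝ) 1, ∀ i j : Fin n,
      ((i ≠ a ∧ i ≠ b) ∨ (j ≠ a ∧ j ≠ b)) → u a b t i j = if i = j then 1 else 0)
    (A : Matrix (Fin n) (Fin n) ℂ)
    (Δ : Fin n → ℝ) (hΔ01 : ∀ i, Δ i ∈ Set.Icc (0 : ℝ) 1)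
    (hΔcross : ∀ i, 0 < Δ i → HasZeroCross A i)
    (M : ℕ) (k : Fin N → Fin n)
    (hmono : StrictMono k)
    (hgap : ∀ (j : ℕ) (hj : j + 1 < N),
      (k ⟨j, Nat.lt_of_succ_lt hj⟩ : ℕ) + M ≤ (k ⟨j + 1, hj⟩ : ℕ))
    (hwin : ∀ j : Fin N, (k j : ℕ) + M ≤ n)
    (hex : ∀ j : Fin N, ∃ i : Fin n,
      (k j : ℕ) ≤ (i : ℕ) ∧ (i : ℕ) < (k j : ℕ) + M ∧ Δ i = 1)
    (V : Fin N → Matrix (Fin n) (Fin n) ℂ)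
    (hV : ∀ j : Fin N, V j = (List.ofFn fun a : Fin (M - 1) =>
      u (k j) ⟨(k j : ℕ) + 1 + (a : ℕ), by have := a.isLt; have := hwin j; omega⟩
        (Δ ⟨(k j : ℕ) + 1 + (a : ℕ), by have := a.isLt; have := hwin j; omega⟩)).prod)
    (B : Matrix (Fin n) (Fin n) ℂ)
    (hB : B = (List.ofFn V).reverse.prod * A * ((List.ofFn V).reverse.prod)ᴴ) :
    ∀ j : Fin N, HasZeroCross B (k j) := by
  have hsep : ∀ j1 j2 : Fin N, (j1 : ℕ) < (j2 : ℕ) → (k j1 : ℕ) + M ≤ (k j2 : ℕ) := by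
    intro j1 j2 h
    have h1 : (j1 : ℕ) + 1 < N := by omega
    have h2 : (k ⟨(j1 : ℕ), j1.isLt⟩ : ℕ) + M ≤ (k ⟨(j1 : ℕ) + 1, h1⟩ : ℕ) := hgap _ h1
    have h3 : k ⟨(j1 : ℕ) + 1, h1⟩ ≤ k j2 := by
      apply hmono.monotone
      simp only [Fin.le_def]
      omega
    have h4 : (⟨(j1 : ℕ), j1.isLt⟩ : Fin N) = j1 := rfl
    rw [h4] at h2
    omega
  intro j
  obtain ⟨i0, hi0l, hi0r, hi0Δ⟩ := hex j
  have hM1 : 1 ≤ M := by omega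
  -- other V's act as identity on the window of j
  have hOther : ∀ j' : Fin N, j' ≠ j → ∀ s : Fin n,
      (k j : ℕ) ≤ (s : ℕ) → (s : ℕ) < (k j : ℕ) + M →
      ∀ r, V j' s r = if s = r then 1 else 0 := by
    intro j' hj' s hWs1 hWs2 r
    rw [hV j']
    apply rowId_prod
    intro Y hY r'
    obtain ⟨a, rfl⟩ := List.mem_ofFn.1 hY
    have hdisj : (s : ℕ) < (k j' : ℕ) ∨ (k j' : ℕ) + M ≤ (s : ℕ) := by
      rcases Fin.lt_or_lt_of_ne hj' with h | h
      · right; have := hsep j' j h; omega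
      · left; have := hsep j j' h; omega
    have haM : (a : ℕ) < M - 1 := a.isLt
    refine hu_delta _ _ ?_ _ (hΔ01 _) s r' (Or.inl ⟨?_, ?_⟩)
    · apply Fin.ne_of_val_ne
      show (k j' : ℕ) ≠ (k j' : ℕ) + 1 + (a : ℕ)
      omega
    · apply Fin.ne_of_val_ne
      show (s : ℕ) ≠ (k j' : ℕ)
      omega
    · apply Fin.ne_of_val_ne
      show (s : ℕ) ≠ (k j' : ℕ) + 1 + (a : ℕ)
      omega
  -- row structure of V j
  have hcp : ∀ a : Fin (M - 1),
      k j ≠ ⟨(k j : ℕ) + 1 + (a : ℕ), by have := a.isLt; have := hwin j; omega⟩ := by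
    intro a
    apply Fin.ne_of_val_ne
    show (k j : ℕ) ≠ (k j : ℕ) + 1 + (a : ℕ)
    omega
  have hwr := window_row (k j)
    (fun a : Fin (M - 1) =>
      u (k j) ⟨(k j : ℕ) + 1 + (a : ℕ), by have := a.isLt; have := hwin j; omega⟩
        (Δ ⟨(k j : ℕ) + 1 + (a : ℕ), by have := a.isLt; have := hwin j; omega⟩))
    (fun a : Fin (M - 1) =>
      ⟨(k j : ℕ) + 1 + (a : ℕ), by have := a.isLt; have := hwin j; omega⟩)
    (fun a => rfl)
    (HasZeroCross A)
    (fun a => Δ (⟨(k j : ℕ) + 1 + (a : ℕ), by have := a.isLt; have := hwin j; omega⟩ : Fin n) = 1)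
    (by
      intro a i r h
      exact hu_delta _ _ (hcp a) _ (hΔ01 _) i r h)
    (by
      intro a h
      beta_reduce at h ⊢
      by_cases h0 : Δ (⟨(k j : ℕ) + 1 + (a : ℕ), by have := a.isLt; have := hwin j; omega⟩ : Fin n) = 0
      · exfalso
        apply h
        rw [h0, hu_zero _ _ (hcp a)]
        exact Matrix.one_apply_ne (hcp a)
      · exact hΔcross _ (lt_of_le_of_ne (hΔ01 _).1 (Ne.symm h0)))
    (by
      intro a h
      beta_reduce at h ⊢
      rw [h, hu_one _ _ (hcp a)]
      simp only [Equiv.Perm.permMatrix, PEquiv.toMatrix_apply, Equiv.toPEquiv_apply,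
        Option.mem_def, Option.some.injEq, Equiv.swap_apply_left]
      rw [if_neg]
      intro hpc
      exact (hcp a) hpc.symm)
  have hVj := hV j
  have hRow : ∀ r, V j (k j) r ≠ 0 → HasZeroCross A r := by
    intro r hr
    rw [hVj] at hr
    rcases hwr.1 r hr with hrc | ⟨_, _, hcr⟩
    · rw [hrc] at hr
      by_cases hic : (i0 : ℕ) = (k j : ℕ)
      · have : i0 = k j := Fin.ext hic
        rw [this] at hi0Δ
        rw [hrc]
        exact hΔcross _ (by rw [hi0Δ]; norm_num)
      · exfalso
        have hb : (i0 : ℕ) - (k j : ℕ) - 1 < M - 1 := by omega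
        apply hr
        apply hwr.2
        refine ⟨⟨(i0 : ℕ) - (k j : ℕ) - 1, hb⟩, ?_⟩
        show Δ _ = 1
        have : (⟨(k j : ℕ) + 1 + ((i0 : ℕ) - (k j : ℕ) - 1), by have := hwin j; omega⟩ : Fin n)
            = i0 := by
          apply Fin.ext
          show (k j : ℕ) + 1 + ((i0 : ℕ) - (k j : ℕ) - 1) = (i0 : ℕ)
          omega
        rw [this]
        exact hi0Δ
    · exact hcr
  have hSupp : ∀ r, V j (k j) r ≠ 0 →
      (k j : ℕ) ≤ (r : ℕ) ∧ (r : ℕ) < (k j : ℕ) + M := by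
    intro r hr
    rw [hVj] at hr
    rcases hwr.1 r hr with hrc | ⟨h1, h2, _⟩
    · rw [hrc]; exact ⟨le_rfl, by omega⟩
    · exact ⟨by omega, by omega⟩
  -- identify row (k j) of the big product with row (k j) of V j
  have hLlen : (List.ofFn V).reverse.length = N := by simp
  have hjN : (j : ℕ) < N := j.isLt
  have hmN : N - 1 - (j : ℕ) < N := by omega
  have hLget : ∀ (i : ℕ) (hi : i < N), (List.ofFn V).reverse[i]'(by omega) = V ⟨N - 1 - i, by omega⟩ := by
    intro i hi
    rw [List.getElem_reverse]
    rw [List.getElem_ofFn]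
    exact congrArg V (Fin.ext (by simp))
  have hLm : (List.ofFn V).reverse[N - 1 - (j : ℕ)]'(by omega) = V j := by
    rw [hLget _ hmN]
    have hidx : (⟨N - 1 - (N - 1 - (j : ℕ)), by omega⟩ : Fin N) = j := by
      apply Fin.ext
      show N - 1 - (N - 1 - (j : ℕ)) = (j : ℕ)
      omega
    rw [hidx]
  have hLsplit : (List.ofFn V).reverse = (List.ofFn V).reverse.take (N - 1 - (j : ℕ)) ++ V j :: (List.ofFn V).reverse.drop (N - 1 - (j : ℕ) + 1) := by
    conv_lhs => rw [← List.take_append_drop (N - 1 - (j : ℕ)) (List.ofFn V).reverse]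
    rw [List.drop_eq_getElem_cons (by omega), hLm]
  have hProdRow : ∀ r, (List.ofFn V).reverse.prod (k j) r = V j (k j) r := by
    intro r
    rw [hLsplit, List.prod_append, List.prod_cons]
    rw [mul_row_id (k j) _ _ ?_ r]
    · refine row_mul_prod (k j) (V j)
        (fun s => (k j : ℕ) ≤ (s : ℕ) ∧ (s : ℕ) < (k j : ℕ) + M) hSupp _ ?_ r
      intro Y hY s hWs r'
      obtain ⟨i, hi, hYi⟩ := List.mem_iff_getElem.1 hY
      have hilen : N - 1 - (j : ℕ) + 1 + i < N := by
        have := hi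
        simp only [List.length_drop, hLlen] at this
        omega
      have heq : ((List.ofFn V).reverse.drop (N - 1 - (j : ℕ) + 1))[i]'hi
          = (List.ofFn V).reverse[N - 1 - (j : ℕ) + 1 + i]'(by rw [hLlen]; omega) := List.getElem_drop
      rw [heq, hLget _ hilen] at hYi
      have hj' : (⟨N - 1 - (N - 1 - (j : ℕ) + 1 + i), by omega⟩ : Fin N) ≠ j := by
        apply Fin.ne_of_val_ne
        show N - 1 - (N - 1 - (j : ℕ) + 1 + i) ≠ (j : ℕ)
        omega
      rw [← hYi]
      exact hOther _ hj' s hWs.1 hWs.2 r'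
    · intro s
      apply rowId_prod
      intro Y hY r'
      obtain ⟨i, hi, hYi⟩ := List.mem_iff_getElem.1 hY
      have hilen : i < N - 1 - (j : ℕ) := by
        have := hi
        simp only [List.length_take, hLlen] at this
        omega
      have heq : ((List.ofFn V).reverse.take (N - 1 - (j : ℕ)))[i]'hi
          = (List.ofFn V).reverse[i]'(by rw [hLlen]; omega) := List.getElem_take
      rw [heq, hLget _ (by omega)] at hYi
      have hj' : (⟨N - 1 - i, by omega⟩ : Fin N) ≠ j := by
        apply Fin.ne_of_val_ne
        show N - 1 - i ≠ (j : ℕ)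
        omega
      rw [← hYi]
      exact hOther _ hj' (k j) le_rfl (by omega) r'
  have hProdCross : ∀ r, (List.ofFn V).reverse.prod (k j) r ≠ 0 → HasZeroCross A r := by
    intro r hr
    rw [hProdRow r] at hr
    exact hRow r hr
  constructor
  · intro q
    rw [hB]
    have h1 : ∀ s, ((List.ofFn V).reverse.prod * A) (k j) s = 0 := by
      intro s
      rw [Matrix.mul_apply]
      apply Finset.sum_eq_zero
      intro r _
      by_cases hr : (List.ofFn V).reverse.prod (k j) r = 0
      · rw [hr, zero_mul]
      · rw [(hProdCross r hr).1 s, mul_zero]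
    rw [Matrix.mul_apply]
    apply Finset.sum_eq_zero
    intro s _
    rw [h1 s, zero_mul]
  · intro q
    rw [hB, Matrix.mul_assoc]
    have h2 : ∀ s, (A * ((List.ofFn V).reverse.prod)ᴴ) s (k j) = 0 := by
      intro s
      rw [Matrix.mul_apply]
      apply Finset.sum_eq_zero
      intro r _
      rw [Matrix.conjTranspose_apply]
      by_cases hr : (List.ofFn V).reverse.prod (k j) r = 0
      · rw [hr]
        simp
      · rw [(hProdCross r hr).2 s, zero_mul]
    rw [Matrix.mul_apply]
    apply Finset.sum_eq_zero
    intro s _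
    rw [h2 s, mul_zero]
end

section
/- Let A be an n×n complex matrix with zero crosses at the distinct positions z_1, …, z_m. Then there exists a continuous map V : [0,1] → M_n(ℂ) such that V(θ) is unitary for every θ ∈ [0,1], V(0) is the identity matrix, V(1) A V(1)* has zero crosses at positions 1, …, m, and for every r ∈ ℕ such that A has diagonal radius at most r and every θ ∈ [0,1], the matrix V(θ) A V(θ)* has diagonal radius at most r + 2. -/
open Matrix

/-- `A` has diagonal radius at most `r`: `A i j = 0` whenever `|i - j| ≥ r`. -/
def DiagRadiusLE {n : ℕ} (A : Matrix (Fin n) (Fin n) ℂ) (r : ℕ) : Prop :=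
  ∀ i j : Fin n, (r : ℤ) ≤ |(i : ℤ) - (j : ℤ)| → A i j = 0

namespace CondenseAux

variable {n : ℕ}

/-- invariant predicate: radius ≤ r+1 everywhere, and radius ≤ r on pairs
on the same side of `p`. -/
def Qp (A : Matrix (Fin n) (Fin n) ℂ) (p r : ℕ) : Prop :=
  ∀ i j : Fin n,
    (((r : ℤ) + 1 ≤ |(i : ℤ) - (j : ℤ)| → A i j = 0) ∧
     ((r : ℤ) ≤ |(i : ℤ) - (j : ℤ)| →
       (((i : ℕ) ≤ p ∧ (j : ℕ) ≤ p) ∨ (p ≤ (i : ℕ) ∧ p ≤ (j : ℕ))) → A i j = 0))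

lemma Qp_of_diag {A : Matrix (Fin n) (Fin n) ℂ} {p r : ℕ} (h : DiagRadiusLE A r) :
    Qp A p r := by
  intro i j
  constructor
  · intro hij; exact h i j (by omega)
  · intro hij _; exact h i j hij

lemma diag_of_Qp {A : Matrix (Fin n) (Fin n) ℂ} {t r : ℕ} (h : Qp A t r)
    (hc : ∀ k : Fin n, (k : ℕ) ≤ t → HasZeroCross A k) :
    DiagRadiusLE A r := by
  intro i j hij
  by_cases hi : (i : ℕ) ≤ t
  · exact (hc i hi).1 j
  by_cases hj : (j : ℕ) ≤ t
  · exact (hc j hj).2 i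
  · exact (h i j).2 hij (Or.inr ⟨by omega, by omega⟩)

lemma diag_mono {A : Matrix (Fin n) (Fin n) ℂ} {r r' : ℕ} (hrr : r ≤ r')
    (h : DiagRadiusLE A r) : DiagRadiusLE A r' := by
  intro i j hij
  exact h i j (le_trans (by exact_mod_cast hrr) hij)


/-- Givens rotation in coordinates q,p. -/
noncomputable def rot (p q : Fin n) (θ : ℝ) : Matrix (Fin n) (Fin n) ℂ :=
  Matrix.of fun i j =>
    if i = q then (if j = q then Complex.cos θ else if j = p then -Complex.sin θ else 0)
    else if i = p then (if j = q then Complex.sin θ else if j = p then Complex.cos θ else 0)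
    else (if i = j then 1 else 0)

/-- scalar factor -/
noncomputable def ff (p q : Fin n) (θ : ℝ) (i : Fin n) : ℂ :=
  if i = q then Complex.cos θ else if i = p then Complex.sin θ else 1

/-- index map -/
def tp (p q : Fin n) (i : Fin n) : Fin n := if i = p then q else i

lemma rot_continuous (p q : Fin n) : Continuous fun θ : ℝ => rot p q θ := by
  apply continuous_matrix
  intro i j
  unfold rot
  simp only [Matrix.of_apply]
  split_ifs <;> fun_prop

lemma rot_zero (p q : Fin n) (hqp : q ≠ p) : rot p q 0 = 1 := by
  funext i j
  unfold rot
  simp only [Matrix.of_apply, Complex.ofReal_zero, Complex.cos_zero, Complex.sin_zero,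
    Matrix.one_apply, neg_zero]
  split_ifs <;> simp_all

section entries
variable {p q : Fin n} (θ : ℝ)

lemma rot_qq : rot p q θ q q = Complex.cos θ := by simp [rot]
lemma rot_qp (hqp : q ≠ p) : rot p q θ q p = -Complex.sin θ := by simp [rot, Ne.symm hqp]
lemma rot_pq (hqp : q ≠ p) : rot p q θ p q = Complex.sin θ := by simp [rot, Ne.symm hqp]
lemma rot_pp (hqp : q ≠ p) : rot p q θ p p = Complex.cos θ := by simp [rot, Ne.symm hqp]
lemma rot_q_other {b : Fin n} (hb : b ≠ q) (hb' : b ≠ p) : rot p q θ q b = 0 := by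
  simp [rot, hb, hb']
lemma rot_p_other (hqp : q ≠ p) {b : Fin n} (hb : b ≠ q) (hb' : b ≠ p) :
    rot p q θ p b = 0 := by
  simp [rot, Ne.symm hqp, hb, hb']
lemma rot_other {i b : Fin n} (hi : i ≠ q) (hi' : i ≠ p) :
    rot p q θ i b = if i = b then 1 else 0 := by
  simp [rot, hi, hi']

lemma rot_real (j b : Fin n) : star (rot p q θ j b) = rot p q θ j b := by
  unfold rot
  simp only [Matrix.of_apply]
  split_ifs <;>
    simp [← Complex.ofReal_cos, ← Complex.ofReal_sin, Complex.conj_ofReal]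

lemma cos_sq_add_sin_sq' :
    Complex.cos θ * Complex.cos θ + Complex.sin θ * Complex.sin θ = 1 := by
  have h := Complex.sin_sq_add_cos_sq (θ : ℂ)
  ring_nf
  ring_nf at h
  linear_combination h

lemma collapse (hqp : q ≠ p) (u v : Fin n → ℂ) (h : ∀ x, x ≠ q → x ≠ p → u x * v x = 0) :
    ∑ b, u b * v b = u q * v q + u p * v p := by
  have h2 : ∑ b, u b * v b = ∑ b ∈ ({q, p} : Finset (Fin n)), u b * v b := by
    refine (Finset.sum_subset (Finset.subset_univ _) ?_).symm
    intro x _ hx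
    simp only [Finset.mem_insert, Finset.mem_singleton] at hx
    push_neg at hx
    exact h x hx.1 hx.2
  rw [h2, Finset.sum_pair hqp]

lemma rot_unitary (hqp : q ≠ p) : rot p q θ ∈ Matrix.unitaryGroup (Fin n) ℂ := by
  rw [Matrix.mem_unitaryGroup_iff]
  funext i j
  have key : (rot p q θ * star (rot p q θ)) i j
      = ∑ b, rot p q θ i b * rot p q θ j b := by
    simp [Matrix.mul_apply, Matrix.star_apply, Matrix.conjTranspose_apply, rot_real]
  rw [key]
  have hpq : p ≠ q := Ne.symm hqp
  rcases eq_or_ne i q with hi | hi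
  · rw [hi, collapse hqp _ _ (fun x hx hx' => by rw [rot_q_other θ hx hx', zero_mul])]
    rcases eq_or_ne j q with hj | hj
    · rw [hj, rot_qq, rot_qp θ hqp, Matrix.one_apply_eq, ← cos_sq_add_sin_sq' θ]
      ring
    rcases eq_or_ne j p with hj' | hj'
    · rw [hj', rot_qq, rot_qp θ hqp, rot_pq θ hqp, rot_pp θ hqp, Matrix.one_apply_ne hqp]
      ring
    · rw [rot_other θ (b := q) hj hj', rot_other θ (b := p) hj hj', if_neg hj, if_neg hj',
        Matrix.one_apply_ne (fun hh : q = j => hj hh.symm)]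
      ring
  rcases eq_or_ne i p with hi' | hi'
  · rw [hi', collapse hqp _ _ (fun x hx hx' => by rw [rot_p_other θ hqp hx hx', zero_mul])]
    rcases eq_or_ne j q with hj | hj
    · rw [hj, rot_pq θ hqp, rot_pp θ hqp, rot_qq, rot_qp θ hqp, Matrix.one_apply_ne hpq]
      ring
    rcases eq_or_ne j p with hj' | hj'
    · rw [hj', rot_pq θ hqp, rot_pp θ hqp, Matrix.one_apply_eq, ← cos_sq_add_sin_sq' θ]
      ring
    · rw [rot_other θ (b := q) hj hj', rot_other θ (b := p) hj hj', if_neg hj, if_neg hj',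
        Matrix.one_apply_ne (fun hh : p = j => hj' hh.symm)]
      ring
  · have hstep : ∀ b, rot p q θ i b * rot p q θ j b
        = if i = b then rot p q θ j b else 0 := by
      intro b
      rw [rot_other θ hi hi']
      split_ifs <;> simp
    simp only [hstep]
    rw [Finset.sum_ite_eq Finset.univ i (fun b => rot p q θ j b)]
    simp only [Finset.mem_univ, if_pos]
    rcases eq_or_ne j q with hj | hj
    · rw [hj, rot_q_other θ hi hi', Matrix.one_apply_ne (fun hh : i = q => hi hh)]
    rcases eq_or_ne j p with hj' | hj'
    · rw [hj', rot_p_other θ hqp hi hi', Matrix.one_apply_ne (fun hh : i = p => hi' hh)]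
    · rw [rot_other θ hj hj', Matrix.one_apply]
      rcases eq_or_ne i j with h | h
      · rw [if_pos h, if_pos h.symm]
      · rw [if_neg h, if_neg (Ne.symm h)]


lemma rot_mul_apply (hqp : q ≠ p) (A : Matrix (Fin n) (Fin n) ℂ)
    (hrow : ∀ j, A p j = 0) (i b : Fin n) :
    (rot p q θ * A) i b = ff p q θ i * A (tp p q i) b := by
  rw [Matrix.mul_apply]
  rcases eq_or_ne i q with hi | hi
  · rw [hi, collapse hqp _ _ (fun x hx hx' => by rw [rot_q_other θ hx hx', zero_mul]),
      rot_qq, rot_qp θ hqp, hrow]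
    simp only [ff, tp, if_pos rfl, if_neg hqp, if_true]
    ring
  rcases eq_or_ne i p with hi' | hi'
  · rw [hi', collapse hqp _ _ (fun x hx hx' => by rw [rot_p_other θ hqp hx hx', zero_mul]),
      rot_pq θ hqp, rot_pp θ hqp, hrow]
    simp only [ff, tp, if_pos rfl, if_neg (Ne.symm hqp), if_true]
    ring
  · have hstep : ∀ a, rot p q θ i a * A a b = if i = a then A a b else 0 := by
      intro a
      rw [rot_other θ hi hi']
      split_ifs <;> simp
    simp only [hstep]
    rw [Finset.sum_ite_eq Finset.univ i (fun a => A a b)]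
    simp only [Finset.mem_univ, if_pos]
    simp only [ff, tp, if_neg hi, if_neg hi']
    ring

lemma mul_rotH_apply (hqp : q ≠ p) (M : Matrix (Fin n) (Fin n) ℂ)
    (hcol : ∀ i, M i p = 0) (i j : Fin n) :
    (M * (rot p q θ)ᴴ) i j = ff p q θ j * M i (tp p q j) := by
  have key : (M * (rot p q θ)ᴴ) i j = ∑ b, M i b * rot p q θ j b := by
    simp [Matrix.mul_apply, Matrix.conjTranspose_apply, rot_real]
  rw [key]
  rcases eq_or_ne j q with hj | hj
  · rw [hj, collapse hqp _ _ (fun x hx hx' => by rw [rot_q_other θ hx hx', mul_zero]),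
      rot_qq, rot_qp θ hqp, hcol]
    simp only [ff, tp, if_pos rfl, if_neg hqp, if_true]
    ring
  rcases eq_or_ne j p with hj' | hj'
  · rw [hj', collapse hqp _ _ (fun x hx hx' => by rw [rot_p_other θ hqp hx hx', mul_zero]),
      rot_pq θ hqp, rot_pp θ hqp, hcol]
    simp only [ff, tp, if_pos rfl, if_neg (Ne.symm hqp), if_true]
    ring
  · have hstep : ∀ b, M i b * rot p q θ j b = if j = b then M i b else 0 := by
      intro b
      rw [rot_other θ hj hj']
      split_ifs <;> simp
    simp only [hstep]
    rw [Finset.sum_ite_eq Finset.univ j (fun b => M i b)]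
    simp only [Finset.mem_univ, if_pos]
    simp only [ff, tp, if_neg hj, if_neg hj']
    ring

lemma rot_conj_apply (hqp : q ≠ p) (A : Matrix (Fin n) (Fin n) ℂ)
    (hrow : ∀ j, A p j = 0) (hcol : ∀ i, A i p = 0) (i j : Fin n) :
    (rot p q θ * A * (rot p q θ)ᴴ) i j
      = ff p q θ i * ff p q θ j * A (tp p q i) (tp p q j) := by
  have hM : ∀ i, (rot p q θ * A) i p = 0 := by
    intro i
    rw [rot_mul_apply θ hqp A hrow, hcol, mul_zero]
  rw [mul_rotH_apply θ hqp _ hM, rot_mul_apply θ hqp A hrow]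
  ring

end entries

section step
variable {p q : Fin n}

lemma swap_step (hq : (q : ℕ) + 1 = (p : ℕ)) (A : Matrix (Fin n) (Fin n) ℂ)
    (hrow : ∀ j, A p j = 0) (hcol : ∀ i, A i p = 0) :
    ∃ W : ℝ → Matrix (Fin n) (Fin n) ℂ,
      Continuous W ∧ (∀ θ, W θ ∈ Matrix.unitaryGroup (Fin n) ℂ) ∧ W 0 = 1 ∧
      HasZeroCross (W 1 * A * (W 1)ᴴ) q ∧
      (∀ k, k ≠ q → k ≠ p → HasZeroCross A k → HasZeroCross (W 1 * A * (W 1)ᴴ) k) ∧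
      (∀ r : ℕ, Qp A (p : ℕ) r →
        (∀ θ, DiagRadiusLE (W θ * A * (W θ)ᴴ) (r + 1)) ∧
        Qp (W 1 * A * (W 1)ᴴ) (q : ℕ) r) := by
  have hqp : q ≠ p := by
    intro h; rw [h] at hq; omega
  refine ⟨fun θ => rot p q (θ * (Real.pi / 2)), ?_, ?_, ?_, ?_, ?_, ?_⟩
  · exact (rot_continuous p q).comp (by fun_prop) |>.congr (fun θ => rfl)
  · intro θ; exact rot_unitary _ hqp
  · show rot p q ((0:ℝ) * (Real.pi / 2)) = 1
    rw [zero_mul, rot_zero p q hqp]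
  · -- zero cross at q at θ = 1
    have hcos : Complex.cos ((1 : ℝ) * (Real.pi / 2) : ℝ) = 0 := by
      rw [one_mul, ← Complex.ofReal_cos, Real.cos_pi_div_two, Complex.ofReal_zero]
    constructor
    · intro j
      rw [rot_conj_apply _ hqp A hrow hcol]
      have : ff p q ((1:ℝ) * (Real.pi / 2)) q = 0 := by simp [ff, hcos]
      rw [show tp p q q = q from by simp [tp, hqp], this]
      ring
    · intro i
      rw [rot_conj_apply _ hqp A hrow hcol]
      have : ff p q ((1:ℝ) * (Real.pi / 2)) q = 0 := by simp [ff, hcos]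
      rw [this]
      ring
  · -- other crosses preserved
    intro k hkq hkp hk
    constructor
    · intro j
      rw [rot_conj_apply _ hqp A hrow hcol,
        show tp p q k = k from by simp [tp, hkp], hk.1]
      ring
    · intro i
      rw [rot_conj_apply _ hqp A hrow hcol,
        show tp p q k = k from by simp [tp, hkp], hk.2]
      ring
  · -- radius control
    intro r hQ
    have htp : ∀ i : Fin n, ((tp p q i : Fin n) : ℕ) = if i = p then (q : ℕ) else (i : ℕ) := by
      intro i; unfold tp; split_ifs <;> rfl
    constructor
    · intro θ i j hij
      rw [rot_conj_apply _ hqp A hrow hcol]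
      rw [le_abs] at hij
      have hi := htp i
      have hj := htp j
      have hzero : A (tp p q i) (tp p q j) = 0 := by
        have h1 := (hQ (tp p q i) (tp p q j)).1
        have h2 := (hQ (tp p q i) (tp p q j)).2
        by_cases hip : i = p <;> by_cases hjp : j = p
        · exfalso; rw [hip, hjp] at hij; omega
        · rw [if_pos hip] at hi
          rw [if_neg hjp] at hj
          rw [hip] at hij
          rcases le_or_gt (j : ℕ) (q : ℕ) with hc | hc
          · refine h2 ?_ (Or.inl ⟨by omega, by omega⟩)
            rw [le_abs]; omega
          · refine h1 ?_
            rw [le_abs]; omega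
        · rw [if_neg hip] at hi
          rw [if_pos hjp] at hj
          rw [hjp] at hij
          rcases le_or_gt (i : ℕ) (q : ℕ) with hc | hc
          · refine h2 ?_ (Or.inl ⟨by omega, by omega⟩)
            rw [le_abs]; omega
          · refine h1 ?_
            rw [le_abs]; omega
        · rw [if_neg hip] at hi
          rw [if_neg hjp] at hj
          refine h1 ?_
          rw [le_abs]; omega
      rw [hzero]; ring
    · intro i j
      rw [rot_conj_apply _ hqp A hrow hcol]
      have hffq : ff p q ((1:ℝ) * (Real.pi / 2)) q = 0 := by
        simp [ff, ← Complex.ofReal_cos]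
      by_cases hiq : i = q
      · rw [hiq, hffq]
        refine ⟨fun _ => by ring, fun _ _ => by ring⟩
      by_cases hjq : j = q
      · rw [hjq, hffq]
        refine ⟨fun _ => by ring, fun _ _ => by ring⟩
      have hi := htp i
      have hj := htp j
      have hiq' : (i : ℕ) ≠ (q : ℕ) := fun h => hiq (Fin.ext h)
      have hjq' : (j : ℕ) ≠ (q : ℕ) := fun h => hjq (Fin.ext h)
      constructor
      · intro hij
        rw [le_abs] at hij
        have hzero : A (tp p q i) (tp p q j) = 0 := by
          have h1 := (hQ (tp p q i) (tp p q j)).1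
          have h2 := (hQ (tp p q i) (tp p q j)).2
          by_cases hip : i = p <;> by_cases hjp : j = p
          · exfalso; rw [hip, hjp] at hij; omega
          · rw [if_pos hip] at hi
            rw [if_neg hjp] at hj
            rw [hip] at hij
            rcases le_or_gt (j : ℕ) (q : ℕ) with hc | hc
            · refine h2 ?_ (Or.inl ⟨by omega, by omega⟩)
              rw [le_abs]; omega
            · refine h1 ?_
              rw [le_abs]; omega
          · rw [if_neg hip] at hi
            rw [if_pos hjp] at hj
            rw [hjp] at hij
            rcases le_or_gt (i : ℕ) (q : ℕ) with hc | hc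
            · refine h2 ?_ (Or.inl ⟨by omega, by omega⟩)
              rw [le_abs]; omega
            · refine h1 ?_
              rw [le_abs]; omega
          · rw [if_neg hip] at hi
            rw [if_neg hjp] at hj
            refine h1 ?_
            rw [le_abs]; omega
        rw [hzero]; ring
      · intro hij hside
        rw [le_abs] at hij
        have hzero : A (tp p q i) (tp p q j) = 0 := by
          have h1 := (hQ (tp p q i) (tp p q j)).1
          have h2 := (hQ (tp p q i) (tp p q j)).2
          by_cases hip : i = p <;> by_cases hjp : j = p
          · rw [if_pos hip] at hi
            rw [if_pos hjp] at hj
            rw [hip, hjp] at hij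
            refine h2 ?_ (Or.inl ⟨by omega, by omega⟩)
            rw [le_abs]; omega
          · rw [if_pos hip] at hi
            rw [if_neg hjp] at hj
            rw [hip] at hij hside
            refine h1 ?_
            rw [le_abs]
            rcases hside with ⟨h3, h4⟩ | ⟨h3, h4⟩ <;> omega
          · rw [if_neg hip] at hi
            rw [if_pos hjp] at hj
            rw [hjp] at hij hside
            refine h1 ?_
            rw [le_abs]
            rcases hside with ⟨h3, h4⟩ | ⟨h3, h4⟩ <;> omega
          · rw [if_neg hip] at hi
            rw [if_neg hjp] at hj
            have hip' : (i : ℕ) ≠ (p : ℕ) := fun h => hip (Fin.ext h)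
            have hjp' : (j : ℕ) ≠ (p : ℕ) := fun h => hjp (Fin.ext h)
            refine h2 ?_ ?_
            · rw [le_abs]; omega
            · rcases hside with ⟨h3, h4⟩ | ⟨h3, h4⟩
              · exact Or.inl ⟨by omega, by omega⟩
              · exact Or.inr ⟨by omega, by omega⟩
        rw [hzero]; ring

end step

section glue
variable (W V' : ℝ → Matrix (Fin n) (Fin n) ℂ)

/-- concatenation of two unitary paths -/
noncomputable def glue : ℝ → Matrix (Fin n) (Fin n) ℂ :=
  fun θ => if θ ≤ 1/2 then W (2*θ) else V' (2*θ - 1) * W 1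

lemma glue_spec (A : Matrix (Fin n) (Fin n) ℂ)
    (hWc : Continuous W) (hWu : ∀ θ, W θ ∈ Matrix.unitaryGroup (Fin n) ℂ)
    (hW0 : W 0 = 1)
    (hVc : Continuous V') (hVu : ∀ θ, V' θ ∈ Matrix.unitaryGroup (Fin n) ℂ)
    (hV0 : V' 0 = 1) :
    Continuous (glue W V') ∧ (∀ θ, glue W V' θ ∈ Matrix.unitaryGroup (Fin n) ℂ) ∧
    glue W V' 0 = 1 ∧
    glue W V' 1 * A * (glue W V' 1)ᴴ = V' 1 * (W 1 * A * (W 1)ᴴ) * (V' 1)ᴴ ∧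
    ∀ P : Matrix (Fin n) (Fin n) ℂ → Prop,
      (∀ θ, P (W θ * A * (W θ)ᴴ)) →
      (∀ θ, P (V' θ * (W 1 * A * (W 1)ᴴ) * (V' θ)ᴴ)) →
      ∀ θ, P (glue W V' θ * A * (glue W V' θ)ᴴ) := by
  have hprod : ∀ t, (V' t * W 1) * A * ((V' t * W 1))ᴴ
      = V' t * (W 1 * A * (W 1)ᴴ) * (V' t)ᴴ := by
    intro t
    rw [Matrix.conjTranspose_mul]
    noncomm_ring [Matrix.mul_assoc]
  refine ⟨?_, ?_, ?_, ?_, ?_⟩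
  · unfold glue
    apply Continuous.if_le (f := id) (g := fun _ => (1:ℝ)/2)
    · fun_prop
    · fun_prop
    · exact continuous_id
    · exact continuous_const
    · intro x hx
      simp only [id] at hx
      rw [hx]
      norm_num [hV0]
  · intro θ
    unfold glue
    split_ifs
    · exact hWu _
    · exact mul_mem (hVu _) (hWu _)
  · unfold glue
    norm_num [hW0]
  · unfold glue
    norm_num
    simp only [Matrix.mul_assoc]
  · intro P hP1 hP2 θ
    unfold glue
    split_ifs
    · exact hP1 _
    · rw [hprod]
      exact hP2 _

end glue

/-- Inner lemma : move a zero cross from position `p = t + d` down to position `t`. -/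
lemma inner (d : ℕ) : ∀ (A : Matrix (Fin n) (Fin n) ℂ) (t p : Fin n),
    (p : ℕ) = (t : ℕ) + d →
    HasZeroCross A p →
    (∀ k : Fin n, (k : ℕ) < (t : ℕ) → HasZeroCross A k) →
    ∃ V : ℝ → Matrix (Fin n) (Fin n) ℂ,
      Continuous V ∧ (∀ θ, V θ ∈ Matrix.unitaryGroup (Fin n) ℂ) ∧ V 0 = 1 ∧
      HasZeroCross (V 1 * A * (V 1)ᴴ) t ∧
      (∀ k : Fin n, HasZeroCross A k → ((k : ℕ) < (t : ℕ) ∨ (p : ℕ) < (k : ℕ)) →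
        HasZeroCross (V 1 * A * (V 1)ᴴ) k) ∧
      (∀ r : ℕ, Qp A (p : ℕ) r →
        (∀ θ, DiagRadiusLE (V θ * A * (V θ)ᴴ) (r + 1)) ∧
        Qp (V 1 * A * (V 1)ᴴ) (t : ℕ) r) := by
  induction d with
  | zero =>
    intro A t p hp hcross _hlow
    have : p = t := Fin.ext (by omega)
    subst this
    refine ⟨fun _ => 1, continuous_const, fun _ => ?_, rfl, ?_, ?_, ?_⟩
    · exact Submonoid.one_mem _
    · simpa using hcross
    · intro k hk _; simpa using hk
    · intro r hQ
      constructor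
      · intro θ
        simp only [Matrix.conjTranspose_one, Matrix.one_mul, Matrix.mul_one]
        intro i j hij
        exact (hQ i j).1 (by omega)
      · simpa using hQ
  | succ d ih =>
    intro A t p hp hcross hlow
    have hp1 : 0 < (p : ℕ) := by omega
    have hpn : (p : ℕ) - 1 < n := by omega
    set q : Fin n := ⟨(p : ℕ) - 1, hpn⟩ with hqdef
    have hq : (q : ℕ) + 1 = (p : ℕ) := by simp [hqdef]; omega
    obtain ⟨W, hWc, hWu, hW0, hWq, hWpres, hWr⟩ := swap_step hq A hcross.1 hcross.2
    set B := W 1 * A * (W 1)ᴴ with hBdef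
    have hqt : (q : ℕ) = (t : ℕ) + d := by omega
    have hBlow : ∀ k : Fin n, (k : ℕ) < (t : ℕ) → HasZeroCross B k := by
      intro k hk
      refine hWpres k ?_ ?_ (hlow k hk)
      · intro h; rw [h] at hk; omega
      · intro h; rw [h] at hk; omega
    obtain ⟨V', hVc, hVu, hV0, hVt, hVpres, hVr⟩ := ih B t q hqt hWq hBlow
    obtain ⟨hGc, hGu, hG0, hGone, hGP⟩ := glue_spec W V' A hWc hWu hW0 hVc hVu hV0
    refine ⟨glue W V', hGc, hGu, hG0, ?_, ?_, ?_⟩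
    · rw [hGone]; exact hVt
    · intro k hk hor
      rw [hGone]
      have hkq : k ≠ q := by
        intro h
        rw [h] at hor
        rcases hor with h' | h' <;> omega
      have hkp : k ≠ p := by
        intro h
        rw [h] at hor
        rcases hor with h' | h' <;> omega
      refine hVpres k (hWpres k hkq hkp hk) ?_
      rcases hor with h' | h'
      · exact Or.inl h'
      · exact Or.inr (by omega)
    · intro r hQ
      obtain ⟨h1, h2⟩ := hWr r hQ
      obtain ⟨h3, h4⟩ := hVr r h2
      constructor
      · exact hGP (fun M => DiagRadiusLE M (r + 1)) h1 h3
      · rw [hGone]; exact h4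


lemma outer (N : ℕ) : ∀ (S : Finset (Fin n)) (A : Matrix (Fin n) (Fin n) ℂ),
    (∑ k ∈ S, (k : ℕ)) ≤ N → (∀ k ∈ S, HasZeroCross A k) →
    ∃ V : ℝ → Matrix (Fin n) (Fin n) ℂ,
      Continuous V ∧ (∀ θ, V θ ∈ Matrix.unitaryGroup (Fin n) ℂ) ∧ V 0 = 1 ∧
      (∀ i : Fin n, (i : ℕ) < S.card → HasZeroCross (V 1 * A * (V 1)ᴴ) i) ∧
      (∀ r : ℕ, DiagRadiusLE A r →
        (∀ θ, DiagRadiusLE (V θ * A * (V θ)ᴴ) (r + 2)) ∧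
        DiagRadiusLE (V 1 * A * (V 1)ᴴ) r) := by
  induction N with
  | zero =>
    intro S A hsum hS
    -- sum zero : S is an initial segment automatically? We show the "done" case applies.
    by_cases hdone : ∀ i : Fin n, (i : ℕ) < S.card → i ∈ S
    · refine ⟨fun _ => 1, continuous_const, fun _ => Submonoid.one_mem _, rfl, ?_, ?_⟩
      · intro i hi
        simpa using hS i (hdone i hi)
      · intro r hr
        refine ⟨?_, by simpa using hr⟩
        intro θ
        simp only [Matrix.conjTranspose_one, Matrix.one_mul, Matrix.mul_one]
        exact diag_mono (by omega) hr
    · exfalso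
      push_neg at hdone
      obtain ⟨i, hi1, hi2⟩ := hdone
      -- all elements of S have value 0, so S ⊆ {0}, card ≤ 1
      have hall : ∀ s ∈ S, (s : ℕ) = 0 := by
        intro s hs
        have hle : (s : ℕ) ≤ ∑ k ∈ S, (k : ℕ) :=
          Finset.single_le_sum (fun k _ => Nat.zero_le _) hs
        omega
      have hcard : S.card ≤ 1 := by
        by_contra hc
        push_neg at hc
        obtain ⟨a, ha, b, hb, hab⟩ := Finset.one_lt_card.mp hc
        exact hab (Fin.ext (by rw [hall a ha, hall b hb]))
      have : (i : ℕ) = 0 := by omega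
      have h0 : S.card = 1 := by omega
      obtain ⟨a, ha⟩ := Finset.card_eq_one.mp h0
      have : i = a := Fin.ext (by
        have := hall a (by simp [ha])
        omega)
      rw [this, ha] at hi2
      simp at hi2
  | succ N ihN =>
    intro S A hsum hS
    by_cases hdone : ∀ i : Fin n, (i : ℕ) < S.card → i ∈ S
    · refine ⟨fun _ => 1, continuous_const, fun _ => Submonoid.one_mem _, rfl, ?_, ?_⟩
      · intro i hi
        simpa using hS i (hdone i hi)
      · intro r hr
        refine ⟨?_, by simpa using hr⟩
        intro θ
        simp only [Matrix.conjTranspose_one, Matrix.one_mul, Matrix.mul_one]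
        exact diag_mono (by omega) hr
    · push_neg at hdone
      obtain ⟨i₀, hi₀1, hi₀2⟩ := hdone
      have hTne : (Finset.univ.filter (fun i : Fin n => (i : ℕ) < S.card ∧ i ∉ S)).Nonempty :=
        ⟨i₀, by simp [hi₀1, hi₀2]⟩
      set t := (Finset.univ.filter (fun i : Fin n => (i : ℕ) < S.card ∧ i ∉ S)).min' hTne
        with htdef
      have htmem := Finset.min'_mem _ hTne
      rw [Finset.mem_filter] at htmem
      obtain ⟨-, ht1, ht2⟩ := htmem
      have hlow : ∀ k : Fin n, (k : ℕ) < (t : ℕ) → k ∈ S := by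
        intro k hk
        by_contra hks
        have hkmem : k ∈ Finset.univ.filter (fun i : Fin n => (i : ℕ) < S.card ∧ i ∉ S) := by
          simp only [Finset.mem_filter, Finset.mem_univ, true_and]
          exact ⟨by omega, hks⟩
        have := Finset.min'_le _ k hkmem
        rw [← htdef] at this
        have : (t : ℕ) ≤ (k : ℕ) := this
        omega
      -- find z : smallest element of S above t
      have hUne : (S.filter (fun s => t < s)).Nonempty := by
        by_contra hU
        rw [Finset.not_nonempty_iff_eq_empty, Finset.filter_eq_empty_iff] at hU
        have hsub : S ⊆ Finset.Iio t := by
          intro s hs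
          rw [Finset.mem_Iio]
          have h1 := hU hs
          rcases lt_or_eq_of_le (not_lt.mp h1) with h | h
          · exact h
          · exact absurd (by rwa [h] at hs) ht2
        have := Finset.card_le_card hsub
        rw [Fin.card_Iio] at this
        omega
      set z := (S.filter (fun s => t < s)).min' hUne with hzdef
      have hzmem := Finset.min'_mem _ hUne
      rw [Finset.mem_filter] at hzmem
      obtain ⟨hz1, hz2⟩ := hzmem
      have hzval : (t : ℕ) < (z : ℕ) := hz2
      have hmid : ∀ k, k ∈ S → k ≠ z → ((k : ℕ) < (t : ℕ) ∨ (z : ℕ) < (k : ℕ)) := by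
        intro k hk hkz
        by_cases h : (k : ℕ) < (t : ℕ)
        · exact Or.inl h
        · right
          have hkt : t < k := by
            rcases Nat.lt_or_ge (t : ℕ) (k : ℕ) with h' | h'
            · exact h'
            · exfalso
              have hkt2 : k = t := Fin.ext (by omega)
              rw [hkt2] at hk
              exact ht2 hk
          have hmem : k ∈ S.filter (fun s => t < s) := Finset.mem_filter.mpr ⟨hk, hkt⟩
          have := Finset.min'_le _ k hmem
          rw [← hzdef] at this
          have hle : (z : ℕ) ≤ (k : ℕ) := this
          have : (k : ℕ) ≠ (z : ℕ) := fun h' => hkz (Fin.ext h')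
          omega
      -- move the cross at z to position t
      obtain ⟨V₁, h1c, h1u, h10, h1t, h1pres, h1r⟩ :=
        inner ((z : ℕ) - (t : ℕ)) A t z (by omega) (hS z hz1) (fun k hk => hS k (hlow k hk))
      set B := V₁ 1 * A * (V₁ 1)ᴴ with hBdef
      set S' : Finset (Fin n) := insert t (S.erase z) with hS'def
      have htnotmem : t ∉ S.erase z := fun h => ht2 (Finset.mem_of_mem_erase h)
      have hcard' : S'.card = S.card := by
        rw [hS'def, Finset.card_insert_of_notMem htnotmem, Finset.card_erase_of_mem hz1]
        have : 0 < S.card := Finset.card_pos.mpr ⟨z, hz1⟩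
        omega
      have hsum' : (∑ k ∈ S', (k : ℕ)) ≤ N := by
        have he : (∑ k ∈ S.erase z, (k : ℕ)) + (z : ℕ) = ∑ k ∈ S, (k : ℕ) :=
          Finset.sum_erase_add S _ hz1
        rw [hS'def, Finset.sum_insert htnotmem]
        omega
      have hScross : ∀ k ∈ S', HasZeroCross B k := by
        intro k hk
        rw [hS'def, Finset.mem_insert] at hk
        rcases hk with hk | hk
        · rw [hk]; exact h1t
        · have hkS := Finset.mem_of_mem_erase hk
          have hkz := Finset.ne_of_mem_erase hk
          exact h1pres k (hS k hkS) (hmid k hkS hkz)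
      obtain ⟨V₂, h2c, h2u, h20, h2cross, h2r⟩ := ihN S' B hsum' hScross
      obtain ⟨hGc, hGu, hG0, hGone, hGP⟩ := glue_spec V₁ V₂ A h1c h1u h10 h2c h2u h20
      refine ⟨glue V₁ V₂, hGc, hGu, hG0, ?_, ?_⟩
      · intro i hi
        rw [hGone]
        exact h2cross i (by omega)
      · intro r hr
        obtain ⟨h5, h6⟩ := h1r r (Qp_of_diag hr)
        have hBr : DiagRadiusLE B r := by
          refine diag_of_Qp h6 ?_
          intro k hk
          rcases Nat.lt_or_ge (k : ℕ) (t : ℕ) with h | h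
          · refine hScross k ?_
            rw [hS'def, Finset.mem_insert]
            right
            refine Finset.mem_erase.mpr ⟨?_, hlow k h⟩
            intro hkz; rw [hkz] at h; omega
          · have : k = t := Fin.ext (by omega)
            rw [this]; exact h1t
        obtain ⟨h7, h8⟩ := h2r r hBr
        constructor
        · refine hGP (fun M => DiagRadiusLE M (r + 2)) ?_ h7
          intro θ
          exact diag_mono (by omega) (h5 θ)
        · rw [hGone]; exact h8

end CondenseAux

/-- Let `A` be an `n×n` complex matrix with zero crosses at the distinct
positions `z 0, …, z (m-1)`.  Then there is a continuous path `V` on `[0,1]` of unitary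
matrices with `V 0 = 1`, such that `V 1 ⬝ A ⬝ (V 1)ᴴ` has zero crosses at the first `m`
positions (positions `1, …, m` in 1-based indexing), and for every `r` with
`A` of diagonal radius at most `r` and every `θ ∈ [0,1]`, the matrix
`V θ ⬝ A ⬝ (V θ)ᴴ` has diagonal radius at most `r + 2`. -/
theorem condense_zero_crosses {n m : ℕ}
    (A : Matrix (Fin n) (Fin n) ℂ)
    (z : Fin m → Fin n) (hz : Function.Injective z)
    (hA : ∀ l, HasZeroCross A (z l)) :
    ∃ V : ℝ → Matrix (Fin n) (Fin n) ℂ,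
      ContinuousOn V (Set.Icc 0 1) ∧
      (∀ θ ∈ Set.Icc (0 : ℝ) 1, V θ ∈ Matrix.unitaryGroup (Fin n) ℂ) ∧
      V 0 = 1 ∧
      (∀ i : Fin n, (i : ℕ) < m → HasZeroCross (V 1 * A * (V 1)ᴴ) i) ∧
      (∀ r : ℕ, DiagRadiusLE A r → ∀ θ ∈ Set.Icc (0 : ℝ) 1,
        DiagRadiusLE (V θ * A * (V θ)ᴴ) (r + 2)) := by
  classical
  set S := Finset.image z Finset.univ with hSdef
  have hcard : S.card = m := by
    rw [hSdef, Finset.card_image_of_injective _ hz, Finset.card_univ, Fintype.card_fin]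
  have hScross : ∀ k ∈ S, HasZeroCross A k := by
    intro k hk
    obtain ⟨l, -, rfl⟩ := Finset.mem_image.mp hk
    exact hA l
  obtain ⟨V, hc, hu, h0, hcross, hr⟩ :=
    CondenseAux.outer (∑ k ∈ S, (k : ℕ)) S A le_rfl hScross
  exact ⟨V, hc.continuousOn, fun θ _ => hu θ, h0,
    fun i hi => hcross i (by omega),
    fun r hrr θ _ => (hr r hrr).1 θ⟩
end

section
/- Let A be an n×n complex matrix with a zero cross at position j, and let P = U[(1 2 ⋯ j)] be the permutation matrix of the cycle (1 2 ⋯ j) on {1,…,n} (fixing j+1,…,n). If A has diagonal radius at most r, then P A P* has diagonal radius at most r. -/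
open Matrix

/-- The cycle `(a a+1 ⋯ b)` on the 1-based index set `{1,…,n}` (fixing the other
indices), as a function on 1-based indices. -/
def cycFun (a b s : ℕ) : ℕ :=
  if a ≤ s ∧ s < b then s + 1 else if s = b then a else s

/-- The permutation matrix `U[(a a+1 ⋯ b)]` of the cycle `(a a+1 ⋯ b)` on `{1,…,n}`
(1-based positions `a, b`), with the convention `U e_t = e_{σ t}`. -/
def cycMat (n a b : ℕ) : Matrix (Fin n) (Fin n) ℂ :=
  Matrix.of fun s t => if (s : ℕ) + 1 = cycFun a b ((t : ℕ) + 1) then 1 else 0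

/-- Let `A` be an `n×n` complex matrix with a zero cross at (1-based)
position `j`, and let `P = U[(1 2 ⋯ j)]` be the permutation matrix of the cycle
`(1 2 ⋯ j)` on `{1,…,n}`.  If `A` has diagonal radius at most `r`, then `P ⬝ A ⬝ Pᴴ`
has diagonal radius at most `r`. -/
theorem cycle_conjugation_radius {n : ℕ} (A : Matrix (Fin n) (Fin n) ℂ)
    (j : ℕ) (hj1 : 1 ≤ j) (hjn : j ≤ n)
    (hA : HasZeroCross A ⟨j - 1, by omega⟩)
    (r : ℕ) (hr : DiagRadiusLE A r) :
    DiagRadiusLE (cycMat n 1 j * A * (cycMat n 1 j)ᴴ) r := by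
  have hn : 0 < n := lt_of_lt_of_le hj1 hjn
  set pv : ℕ → ℕ := fun s => if s = 0 then j - 1 else if s < j then s - 1 else s with hpv
  have hlt : ∀ s : Fin n, pv s < n := by
    intro s; have := s.isLt; simp only [hpv]; split_ifs <;> omega
  set p : Fin n → Fin n := fun s => ⟨pv s, hlt s⟩ with hp
  have hP : ∀ s t : Fin n, cycMat n 1 j s t = if t = p s then 1 else 0 := by
    intro s t
    have hs := s.isLt; have ht := t.isLt
    simp only [cycMat, cycFun, Matrix.of_apply, hp, Fin.ext_iff, hpv]
    split_ifs <;> first | rfl | omega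
  have hmul : ∀ i k : Fin n, (cycMat n 1 j * A * (cycMat n 1 j)ᴴ) i k = A (p i) (p k) := by
    intro i k
    simp only [Matrix.mul_apply, Matrix.conjTranspose_apply, hP, ite_mul, one_mul, zero_mul,
      Finset.sum_ite_eq', Finset.mem_univ, if_true, apply_ite (star : ℂ → ℂ), star_one, star_zero,
      mul_ite, mul_one, mul_zero]
  intro i k hik
  rw [hmul]
  by_cases hi : (i : ℕ) = 0
  · have : p i = ⟨j - 1, by omega⟩ := by
      apply Fin.ext; simp only [hp, hpv]; simp [hi]
    rw [this]; exact hA.1 _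
  · by_cases hk : (k : ℕ) = 0
    · have : p k = ⟨j - 1, by omega⟩ := by
        apply Fin.ext; simp only [hp, hpv]; simp [hk]
      rw [this]; exact hA.2 _
    · apply hr
      have hpi : ((p i : ℕ) : ℤ) = (i : ℤ) - 1 ∧ (i : ℕ) < j ∨ ((p i : ℕ) : ℤ) = (i : ℤ) ∧ j ≤ (i : ℕ) := by
        simp only [hp, hpv]; split_ifs <;> omega
      have hpk : ((p k : ℕ) : ℤ) = (k : ℤ) - 1 ∧ (k : ℕ) < j ∨ ((p k : ℕ) : ℤ) = (k : ℤ) ∧ j ≤ (k : ℕ) := by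
        simp only [hp, hpv]; split_ifs <;> omega
      rcases abs_cases ((i : ℤ) - (k : ℤ)) with ⟨h1, h2⟩ | ⟨h1, h2⟩ <;>
      rcases abs_cases (((p i : ℕ) : ℤ) - ((p k : ℕ) : ℤ)) with ⟨h3, h4⟩ | ⟨h3, h4⟩ <;>
        rw [h1] at hik <;> rw [h3] <;> omega
end

section
/- Let 1 ≤ i < j ≤ n, let A be an n×n complex matrix with a zero cross at position j, and let P = U[(i i+1 ⋯ j)] be the permutation matrix of the cycle (i i+1 ⋯ j) on {1,…,n} (fixing the other indices). If A has diagonal radius at most r, then P A P* has diagonal radius at most r + 1. -/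
open Matrix

lemma entry_eq {n : ℕ} (A : Matrix (Fin n) (Fin n) ℂ) (i j : ℕ) (s t u₀ v₀ : Fin n)
    (hu : ∀ u : Fin n, ((s:ℕ)+1 = cycFun i j ((u:ℕ)+1)) ↔ u = u₀)
    (hv : ∀ v : Fin n, ((t:ℕ)+1 = cycFun i j ((v:ℕ)+1)) ↔ v = v₀) :
    (cycMat n i j * A * (cycMat n i j)ᴴ) s t = A u₀ v₀ := by
  simp only [Matrix.mul_apply, Matrix.conjTranspose_apply, cycMat, Matrix.of_apply]
  have h1 : ∀ u : Fin n, (if (s:ℕ)+1 = cycFun i j ((u:ℕ)+1) then (1:ℂ) else 0)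
      = if u = u₀ then 1 else 0 := fun u => by simp [hu u]
  have h2 : ∀ v : Fin n, (if (t:ℕ)+1 = cycFun i j ((v:ℕ)+1) then (1:ℂ) else 0)
      = if v = v₀ then 1 else 0 := fun v => by simp [hv v]
  simp_rw [h1, h2, apply_ite (star : ℂ → ℂ), star_one, star_zero, ite_mul, one_mul,
    zero_mul, mul_ite, mul_one, mul_zero, Finset.sum_ite_eq', Finset.mem_univ, if_true]

/-- Let `1 ≤ i < j ≤ n`, let `A` be an `n×n` complex matrix with a zero
cross at (1-based) position `j`, and let `P = U[(i i+1 ⋯ j)]` be the permutation matrix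
of the cycle `(i i+1 ⋯ j)` on `{1,…,n}` (fixing the other indices).  If `A` has diagonal
radius at most `r`, then `P ⬝ A ⬝ Pᴴ` has diagonal radius at most `r + 1`. -/
theorem partial_cycle_conjugation_radius {n : ℕ} (A : Matrix (Fin n) (Fin n) ℂ)
    (i j : ℕ) (hi : 1 ≤ i) (hij : i < j) (hjn : j ≤ n)
    (hA : HasZeroCross A ⟨j - 1, by omega⟩)
    (r : ℕ) (hr : DiagRadiusLE A r) :
    DiagRadiusLE (cycMat n i j * A * (cycMat n i j)ᴴ) (r + 1) := by
  intro s t hst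
  have hs := s.isLt
  have ht := t.isLt
  refine (entry_eq A i j s t
    ⟨if (s:ℕ)+1 = i then j-1 else if i < (s:ℕ)+1 ∧ (s:ℕ)+1 ≤ j then (s:ℕ)-1 else (s:ℕ),
      by split_ifs <;> omega⟩
    ⟨if (t:ℕ)+1 = i then j-1 else if i < (t:ℕ)+1 ∧ (t:ℕ)+1 ≤ j then (t:ℕ)-1 else (t:ℕ),
      by split_ifs <;> omega⟩ ?_ ?_).trans ?_
  · intro u
    have huu := u.isLt
    simp only [cycFun, Fin.ext_iff]
    split_ifs <;> omega
  · intro v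
    have hvv := v.isLt
    simp only [cycFun, Fin.ext_iff]
    split_ifs <;> omega
  · set a : ℕ := if (s:ℕ)+1 = i then j-1 else if i < (s:ℕ)+1 ∧ (s:ℕ)+1 ≤ j then (s:ℕ)-1 else (s:ℕ) with ha
    set b : ℕ := if (t:ℕ)+1 = i then j-1 else if i < (t:ℕ)+1 ∧ (t:ℕ)+1 ≤ j then (t:ℕ)-1 else (t:ℕ) with hb
    by_cases hu0 : a = j - 1
    · have : (⟨a, by split_ifs at ha <;> omega⟩ : Fin n) = ⟨j-1, by omega⟩ := by
        simpa [Fin.ext_iff] using hu0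
      rw [this]; exact hA.1 _
    · by_cases hv0 : b = j - 1
      · have : (⟨b, by split_ifs at hb <;> omega⟩ : Fin n) = ⟨j-1, by omega⟩ := by
          simpa [Fin.ext_iff] using hv0
        rw [this]; exact hA.2 _
      · apply hr
        rw [Int.abs_eq_natAbs] at hst ⊢
        simp only []
        split_ifs at ha hb <;> omega
end

section
/- Fix N ∈ ℕ, N ≥ 1. Let k, i, n be indices with N ≤ k, k ≤ i − N, and i ≤ n − N, and let θ ∈ [0,1]. Then u_{η_{k,n}}(θ) = U[η_{i,n}] · u_{η_{k,i}}(θ) · U[η_{i,n}]. -/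
open Matrix

/-- The matrix `u_{(a b)}(θ)` (1-based indices `a < b`) built from the four functions
`g₁, g₂, g₃, g₄`: it agrees with the identity outside rows/columns `a, b`, and on the
`{a,b} × {a,b}` corners has entries `g₁ θ, g₂ θ, g₃ θ, g₄ θ`. -/
def uSwap (n : ℕ) (g₁ g₂ g₃ g₄ : ℝ → ℂ) (a b : ℕ) (θ : ℝ) :
    Matrix (Fin n) (Fin n) ℂ :=
  Matrix.of fun s t =>
    if (s : ℕ) + 1 = a ∧ (t : ℕ) + 1 = a then g₁ θ
    else if (s : ℕ) + 1 = a ∧ (t : ℕ) + 1 = b then g₂ θ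
    else if (s : ℕ) + 1 = b ∧ (t : ℕ) + 1 = a then g₃ θ
    else if (s : ℕ) + 1 = b ∧ (t : ℕ) + 1 = b then g₄ θ
    else if s = t then 1 else 0

/-- The permutation matrix `U[(a b)]` of the transposition of the 1-based positions
`a` and `b` of `{1,…,n}`. -/
def swapMat (n : ℕ) (a b : ℕ) : Matrix (Fin n) (Fin n) ℂ :=
  Matrix.of fun s t =>
    if ((s : ℕ) + 1 = a ∧ (t : ℕ) + 1 = b) ∨ ((s : ℕ) + 1 = b ∧ (t : ℕ) + 1 = a) ∨
       (s = t ∧ (s : ℕ) + 1 ≠ a ∧ (s : ℕ) + 1 ≠ b) then 1 else 0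

/-- For fixed `N` and 1-based indices `a, b` with `N ≤ a ≤ b − N`,
`u_{η_{a,b}}(θ) = u_{(a−N+1, b−N+1)}(θ) ⋯ u_{(a, b)}(θ)`. -/
noncomputable def uEta (n N : ℕ) (g₁ g₂ g₃ g₄ : ℝ → ℂ) (a b : ℕ) (θ : ℝ) :
    Matrix (Fin n) (Fin n) ℂ :=
  (List.ofFn fun j : Fin N => uSwap n g₁ g₂ g₃ g₄ (a - N + 1 + (j : ℕ)) (b - N + 1 + (j : ℕ)) θ).prod

/-- The permutation matrix `U[η_{a,b}]` of the product of the `N` disjoint transpositions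
`(a−N+1, b−N+1)(a−N+2, b−N+2)⋯(a, b)` of the 1-based index set `{1,…,n}`. -/
noncomputable def etaPermMat (n N : ℕ) (a b : ℕ) : Matrix (Fin n) (Fin n) ℂ :=
  (List.ofFn fun j : Fin N => swapMat n (a - N + 1 + (j : ℕ)) (b - N + 1 + (j : ℕ))).prod

/- ------------------  auxiliary material  ------------------ -/

section Aux

variable {m : ℕ}

/-- A list of permutations all fixing `x` has product fixing `x`. -/
lemma aux_prod_fixed {α : Type*} (l : List (Equiv.Perm α)) (x : α)
    (h : ∀ σ ∈ l, σ x = x) : l.prod x = x := by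
  induction l with
  | nil => simp
  | cons a l ih =>
    rw [List.prod_cons, Equiv.Perm.mul_apply, ih (fun σ hσ => h σ (List.mem_cons_of_mem _ hσ)),
      h a List.mem_cons_self]

/-- Evaluating the product of the reversed list `List.ofFn f` at a point moved only
by the `j`-th permutation. -/
lemma aux_prod_rev_ofFn_apply {α : Type*} :
    ∀ {N : ℕ} (f : Fin N → Equiv.Perm α) (x y : α) (j : Fin N),
    (∀ j' : Fin N, (j' : ℕ) < (j : ℕ) → f j' x = x) → f j x = y →
    (∀ j' : Fin N, (j : ℕ) < (j' : ℕ) → f j' y = y) →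
    ((List.ofFn f).reverse).prod x = y := by
  intro N
  induction N with
  | zero => intro f x y j; exact j.elim0
  | succ N ih =>
    intro f x y j h2 hj h1
    rw [List.ofFn_succ, List.reverse_cons, List.prod_append, List.prod_singleton,
      Equiv.Perm.mul_apply]
    rcases Fin.eq_zero_or_eq_succ j with rfl | ⟨j₀, rfl⟩
    · rw [hj]
      apply aux_prod_fixed
      intro σ hσ
      rw [List.mem_reverse, List.mem_ofFn] at hσ
      obtain ⟨j', rfl⟩ := hσ
      exact h1 j'.succ (by simp)
    · rw [h2 0 (by simp)]
      exact ih (fun j' => f j'.succ) x y j₀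
        (fun j' hlt => h2 j'.succ (by simpa using hlt)) hj
        (fun j' hlt => h1 j'.succ (by simpa using hlt))

/-- Entrywise: conjugation of a matrix by a permutation matrix. -/
lemma aux_perm_conj_apply (σ : Equiv.Perm (Fin m)) (M : Matrix (Fin m) (Fin m) ℂ) (s t : Fin m) :
    (σ.permMatrix ℂ * M * σ.permMatrix ℂ) s t = M (σ s) (σ.symm t) := by
  rw [PEquiv.toMatrix_toPEquiv_mul, PEquiv.mul_toMatrix_toPEquiv]
  rfl

lemma aux_permMatrix_mul (σ τ : Equiv.Perm (Fin m)) :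
    σ.permMatrix ℂ * τ.permMatrix ℂ = (τ * σ).permMatrix ℂ := by
  rw [PEquiv.toMatrix_toPEquiv_mul]
  ext s t
  simp [Equiv.Perm.permMatrix, PEquiv.toMatrix_apply, Equiv.toPEquiv_apply,
    Equiv.Perm.mul_apply]

lemma aux_permMatrix_one : ((1 : Equiv.Perm (Fin m)).permMatrix ℂ) = 1 := by
  ext s t
  simp [Equiv.Perm.permMatrix, PEquiv.toMatrix_apply, Equiv.toPEquiv_apply,
    Matrix.one_apply, eq_comm]

/-- The product of the permutation matrices of a list of permutations is the permutation
matrix of the product of the reversed list. -/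
lemma aux_prod_permMatrix (l : List (Equiv.Perm (Fin m))) :
    (l.map fun σ => σ.permMatrix ℂ).prod = (l.reverse.prod).permMatrix ℂ := by
  induction l with
  | nil => simpa using aux_permMatrix_one.symm
  | cons σ l ih =>
    rw [List.map_cons, List.prod_cons, ih, aux_permMatrix_mul, List.reverse_cons,
      List.prod_append, List.prod_singleton]

/-- The `Fin`-indexed version of `uSwap`. -/
def uSwapF (n : ℕ) (g₁ g₂ g₃ g₄ : ℝ → ℂ) (p q : Fin n) (θ : ℝ) :
    Matrix (Fin n) (Fin n) ℂ :=
  Matrix.of fun s t =>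
    if s = p ∧ t = p then g₁ θ
    else if s = p ∧ t = q then g₂ θ
    else if s = q ∧ t = p then g₃ θ
    else if s = q ∧ t = q then g₄ θ
    else if s = t then 1 else 0

lemma aux_uSwap_eq (g₁ g₂ g₃ g₄ : ℝ → ℂ) (θ : ℝ) (p q : Fin m) :
    uSwap m g₁ g₂ g₃ g₄ ((p : ℕ) + 1) ((q : ℕ) + 1) θ = uSwapF m g₁ g₂ g₃ g₄ p q θ := by
  ext s t
  simp only [uSwap, uSwapF, Matrix.of_apply, add_left_inj, Fin.val_inj]

lemma aux_swapMat_eq (p q : Fin m) :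
    swapMat m ((p : ℕ) + 1) ((q : ℕ) + 1) = (Equiv.swap p q).permMatrix ℂ := by
  ext s t
  simp only [swapMat, Matrix.of_apply, add_left_inj, Fin.val_inj, Equiv.Perm.permMatrix,
    PEquiv.toMatrix_apply, Equiv.toPEquiv_apply, Option.mem_some_iff]
  by_cases hsp : s = p <;> by_cases hsq : s = q <;> by_cases htp : t = p <;>
      by_cases htq : t = q <;>
    simp_all [Equiv.swap_apply_def, Option.mem_some_iff, Fin.val_inj, eq_comm]

/-- Conjugation of `uSwapF` by the permutation matrix of an involution. -/
lemma aux_conj_uSwapF (g₁ g₂ g₃ g₄ : ℝ → ℂ) (θ : ℝ) (σ : Equiv.Perm (Fin m))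
    (hσ : ∀ x, σ (σ x) = x) (p q : Fin m) :
    σ.permMatrix ℂ * uSwapF m g₁ g₂ g₃ g₄ p q θ * σ.permMatrix ℂ =
      uSwapF m g₁ g₂ g₃ g₄ (σ p) (σ q) θ := by
  have hsymm : ∀ x, σ.symm x = σ x := fun x => by
    apply σ.injective
    rw [Equiv.apply_symm_apply, hσ]
  have key : ∀ x y : Fin m, σ x = y ↔ x = σ y := by
    intro x y
    constructor
    · rintro rfl; exact (hσ x).symm
    · rintro rfl; exact hσ y
  ext s t
  rw [aux_perm_conj_apply, hsymm]
  simp only [uSwapF, Matrix.of_apply, key, hσ]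

/-- Conjugating a product by an involutory matrix. -/
lemma aux_conj_prod (P : Matrix (Fin m) (Fin m) ℂ) (hP : P * P = 1)
    (l : List (Matrix (Fin m) (Fin m) ℂ)) :
    (l.map fun A => P * A * P).prod = P * l.prod * P := by
  induction l with
  | nil => simp [hP]
  | cons A l ih =>
    rw [List.map_cons, List.prod_cons, ih, List.prod_cons]
    calc (P * A * P) * (P * l.prod * P) = P * A * (P * P) * l.prod * P := by
          simp only [Matrix.mul_assoc]
      _ = P * (A * l.prod) * P := by rw [hP]; simp only [Matrix.mul_assoc, Matrix.one_mul]

end Aux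

/-- Fix `N ≥ 1`.  If `N ≤ k`, `k ≤ i − N` and `i ≤ n − N` (1-based indices),
then for `θ ∈ [0,1]`, `u_{η_{k,n}}(θ) = U[η_{i,n}] ⬝ u_{η_{k,i}}(θ) ⬝ U[η_{i,n}]`. -/
theorem uEta_conj {n : ℕ} (N : ℕ) (hN : 1 ≤ N) (g₁ g₂ g₃ g₄ : ℝ → ℂ) (k i : ℕ)
    (hNk : N ≤ k) (hki : k + N ≤ i) (hin : i + N ≤ n)
    (θ : ℝ) (hθ : θ ∈ Set.Icc (0 : ℝ) 1) :
    uEta n N g₁ g₂ g₃ g₄ k n θ =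
      etaPermMat n N i n * uEta n N g₁ g₂ g₃ g₄ k i θ * etaPermMat n N i n := by
  -- the three families of indices, as elements of `Fin n`
  set K : Fin N → Fin n := fun j => ⟨k - N + (j : ℕ), by omega⟩ with hK
  set I : Fin N → Fin n := fun j => ⟨i - N + (j : ℕ), by omega⟩ with hI
  set Nn : Fin N → Fin n := fun j => ⟨n - N + (j : ℕ), by omega⟩ with hNn
  -- the permutation η = ∏ (I j, Nn j)
  set f : Fin N → Equiv.Perm (Fin n) := fun j => Equiv.swap (I j) (Nn j) with hf
  set η : Equiv.Perm (Fin n) := ((List.ofFn f).reverse).prod with hη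
  -- basic distinctness facts
  have hKI : ∀ j j' : Fin N, K j ≠ I j' := by
    intro j j'; simp only [hK, hI, ne_eq, Fin.mk.injEq]; omega
  have hKN : ∀ j j' : Fin N, K j ≠ Nn j' := by
    intro j j'; simp only [hK, hNn, ne_eq, Fin.mk.injEq]; omega
  have hIN : ∀ j j' : Fin N, I j ≠ Nn j' := by
    intro j j'; simp only [hI, hNn, ne_eq, Fin.mk.injEq]; omega
  have hII : ∀ j j' : Fin N, j ≠ j' → I j ≠ I j' := by
    intro j j' hjj'; simp only [hI, ne_eq, Fin.mk.injEq]
    intro h; exact hjj' (Fin.ext (by omega))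
  have hNN : ∀ j j' : Fin N, j ≠ j' → Nn j ≠ Nn j' := by
    intro j j' hjj'; simp only [hNn, ne_eq, Fin.mk.injEq]
    intro h; exact hjj' (Fin.ext (by omega))
  -- evaluation of η
  have hηK : ∀ j, η (K j) = K j := by
    intro j
    apply aux_prod_fixed
    intro σ hσ
    rw [List.mem_reverse, List.mem_ofFn] at hσ
    obtain ⟨j', rfl⟩ := hσ
    exact Equiv.swap_apply_of_ne_of_ne (hKI j j') (hKN j j')
  have hηI : ∀ j, η (I j) = Nn j := by
    intro j
    apply aux_prod_rev_ofFn_apply f (I j) (Nn j) j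
    · intro j' hlt
      exact Equiv.swap_apply_of_ne_of_ne (hII j j' (by omega)) (hIN j j')
    · exact Equiv.swap_apply_left _ _
    · intro j' hlt
      exact Equiv.swap_apply_of_ne_of_ne (Ne.symm (hIN j' j)) (hNN j j' (by omega))
  have hηN : ∀ j, η (Nn j) = I j := by
    intro j
    apply aux_prod_rev_ofFn_apply f (Nn j) (I j) j
    · intro j' hlt
      exact Equiv.swap_apply_of_ne_of_ne (Ne.symm (hIN j' j)) (hNN j j' (by omega))
    · exact Equiv.swap_apply_right _ _
    · intro j' hlt
      exact Equiv.swap_apply_of_ne_of_ne (hII j j' (by omega)) (hIN j j')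
  have hηinv : ∀ x, η (η x) = x := by
    intro x
    by_cases hxI : ∃ j, x = I j
    · obtain ⟨j, rfl⟩ := hxI
      rw [hηI, hηN]
    by_cases hxN : ∃ j, x = Nn j
    · obtain ⟨j, rfl⟩ := hxN
      rw [hηN, hηI]
    push_neg at hxI hxN
    have hfix : η x = x := by
      apply aux_prod_fixed
      intro σ hσ
      rw [List.mem_reverse, List.mem_ofFn] at hσ
      obtain ⟨j', rfl⟩ := hσ
      exact Equiv.swap_apply_of_ne_of_ne (hxI j') (hxN j')
    rw [hfix, hfix]
  -- the permutation matrix identity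
  have hP : etaPermMat n N i n = η.permMatrix ℂ := by
    rw [etaPermMat, hη, ← aux_prod_permMatrix, List.map_ofFn]
    congr 1
    apply congrArg List.ofFn
    funext j
    have h1 : i - N + 1 + (j : ℕ) = ((I j : Fin n) : ℕ) + 1 := by simp only [hI]; omega
    have h2 : n - N + 1 + (j : ℕ) = ((Nn j : Fin n) : ℕ) + 1 := by simp only [hNn]; omega
    rw [h1, h2, aux_swapMat_eq]
    rfl
  have hPP : etaPermMat n N i n * etaPermMat n N i n = 1 := by
    have hone : η * η = 1 := Equiv.ext fun x => by
      rw [Equiv.Perm.mul_apply, hηinv, Equiv.Perm.one_apply]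
    rw [hP, aux_permMatrix_mul, hone, aux_permMatrix_one]
  -- rewrite the two uEta's in terms of uSwapF
  have hUkn : uEta n N g₁ g₂ g₃ g₄ k n θ =
      (List.ofFn fun j : Fin N => uSwapF n g₁ g₂ g₃ g₄ (K j) (Nn j) θ).prod := by
    rw [uEta]
    congr 1
    apply congrArg List.ofFn
    funext j
    have h1 : k - N + 1 + (j : ℕ) = ((K j : Fin n) : ℕ) + 1 := by simp only [hK]; omega
    have h2 : n - N + 1 + (j : ℕ) = ((Nn j : Fin n) : ℕ) + 1 := by simp only [hNn]; omega
    rw [h1, h2, aux_uSwap_eq]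
  have hUki : uEta n N g₁ g₂ g₃ g₄ k i θ =
      (List.ofFn fun j : Fin N => uSwapF n g₁ g₂ g₃ g₄ (K j) (I j) θ).prod := by
    rw [uEta]
    congr 1
    apply congrArg List.ofFn
    funext j
    have h1 : k - N + 1 + (j : ℕ) = ((K j : Fin n) : ℕ) + 1 := by simp only [hK]; omega
    have h2 : i - N + 1 + (j : ℕ) = ((I j : Fin n) : ℕ) + 1 := by simp only [hI]; omega
    rw [h1, h2, aux_uSwap_eq]
  -- conjugating each factor
  have hconj : ∀ j : Fin N,
      etaPermMat n N i n * uSwapF n g₁ g₂ g₃ g₄ (K j) (I j) θ * etaPermMat n N i n =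
        uSwapF n g₁ g₂ g₃ g₄ (K j) (Nn j) θ := by
    intro j
    rw [hP, aux_conj_uSwapF g₁ g₂ g₃ g₄ θ η hηinv, hηK, hηI]
  -- put everything together
  rw [hUkn, hUki, ← aux_conj_prod _ hPP, List.map_ofFn]
  congr 1
  apply congrArg List.ofFn
  funext j
  exact (hconj j).symm
end

section
/- Fix N ∈ ℕ, N ≥ 1. For indices i, n with N + 1 ≤ i and i ≤ n − N, the following identity of n×n permutation matrices holds: U[γ_{1,n}]^N · U[η_{i−1,n}] = U[γ_{1,i−1}]^N · U[γ_{i,n}]^N. -/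
open Matrix

def entryMat (n : ℕ) (f : ℕ → ℕ) : Matrix (Fin n) (Fin n) ℂ :=
  Matrix.of fun s t => if (s : ℕ) + 1 = f ((t : ℕ) + 1) then 1 else 0

def swapFun (a b s : ℕ) : ℕ := if s = a then b else if s = b then a else s

def shiftFun (K c d s : ℕ) : ℕ :=
  if c ≤ s ∧ s < c + K then s + (d - c)
  else if d ≤ s ∧ s < d + K then s - (d - c) else s

lemma entryMat_one (n : ℕ) : entryMat n id = 1 := by
  ext s t
  simp only [entryMat, Matrix.of_apply, id, Matrix.one_apply]
  by_cases h : s = t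
  · simp [h]
  · rw [if_neg (fun hh : (s : ℕ) + 1 = (t : ℕ) + 1 => h (Fin.ext (by omega))), if_neg h]

lemma entryMat_congr (n : ℕ) (f g : ℕ → ℕ) (h : ∀ s, 1 ≤ s → s ≤ n → f s = g s) :
    entryMat n f = entryMat n g := by
  ext s t
  simp only [entryMat, Matrix.of_apply]
  rw [h ((t : ℕ) + 1) (by omega) (by omega)]

lemma entryMat_mul (n : ℕ) (f g : ℕ → ℕ)
    (hg : ∀ s, 1 ≤ s → s ≤ n → 1 ≤ g s ∧ g s ≤ n) :
    entryMat n f * entryMat n g = entryMat n (f ∘ g) := by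
  ext s t
  rw [Matrix.mul_apply]
  obtain ⟨h1, h2⟩ := hg ((t : ℕ) + 1) (by omega) (by omega)
  have hm : g ((t : ℕ) + 1) - 1 < n := by omega
  rw [Finset.sum_eq_single (⟨g ((t : ℕ) + 1) - 1, hm⟩ : Fin n)]
  · simp only [entryMat, Matrix.of_apply, Function.comp]
    have hv : (((⟨g ((t : ℕ) + 1) - 1, hm⟩ : Fin n) : ℕ)) + 1 = g ((t : ℕ) + 1) := by
      simp; omega
    rw [hv, if_pos rfl, mul_one]
  · intro k _ hk
    simp only [entryMat, Matrix.of_apply]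
    rw [if_neg (show ¬((k : ℕ) + 1 = g ((t : ℕ) + 1)) from fun hh =>
      hk (Fin.ext (by simp only [Fin.val_mk]; omega))), mul_zero]
  · intro h; exact absurd (Finset.mem_univ _) h

lemma entryMat_pow (n : ℕ) (f : ℕ → ℕ)
    (hf : ∀ s, 1 ≤ s → s ≤ n → 1 ≤ f s ∧ f s ≤ n) (N : ℕ) :
    (entryMat n f) ^ N = entryMat n (f^[N]) := by
  induction N with
  | zero => simp [entryMat_one]
  | succ N ih =>
      rw [pow_succ, ih, entryMat_mul n _ f hf, Function.iterate_succ]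

lemma swapMat_eq (n a b : ℕ) : swapMat n a b = entryMat n (swapFun a b) := by
  ext s t
  simp only [swapMat, entryMat, Matrix.of_apply, swapFun]
  have hst : (s = t) ↔ ((s : ℕ) = (t : ℕ)) := Fin.ext_iff
  split_ifs with h h1 h2 h3 h4 h5 <;> simp_all <;> omega

lemma cycFun_iter_fix (a b k s : ℕ) (hab : a ≤ b) (h : s < a ∨ b < s) : (cycFun a b)^[k] s = s := by
  induction k with
  | zero => rfl
  | succ k ih =>
      rw [Function.iterate_succ_apply', ih]
      unfold cycFun
      split_ifs <;> omega

lemma cycFun_iter (a b k s : ℕ) (hs : a ≤ s) (hsb : s ≤ b) (hk : a + k ≤ b + 1) :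
    (cycFun a b)^[k] s = if s + k ≤ b then s + k else s + k + a - b - 1 := by
  induction k generalizing s with
  | zero => simp only [Function.iterate_zero, id_eq, Nat.add_zero]; split_ifs <;> omega
  | succ k ih =>
      rw [Function.iterate_succ_apply', ih s hs hsb (by omega)]
      rcases le_or_gt (s + k) b with h | h
      · rw [if_pos h]
        unfold cycFun
        split_ifs <;> omega
      · rw [if_neg (by omega)]
        unfold cycFun
        split_ifs <;> omega

lemma shift_prod (n K c d : ℕ) (hc : 1 ≤ c) (hcd : c + K ≤ d) (hd : d + K ≤ n + 1) :
    (List.ofFn fun j : Fin K => swapMat n (c + (j : ℕ)) (d + (j : ℕ))).prod =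
      entryMat n (shiftFun K c d) := by
  induction K generalizing c d with
  | zero =>
      simp only [List.ofFn_zero, List.prod_nil]
      rw [← entryMat_one n]
      exact (entryMat_congr n _ _ (fun s _ _ => by simp only [id_eq]; unfold shiftFun; split_ifs <;> omega)).symm
  | succ K ih =>
      rw [List.ofFn_succ]
      simp only [Fin.val_zero, add_zero, Fin.val_succ, List.prod_cons]
      have he : (fun j : Fin K => swapMat n (c + ((j : ℕ) + 1)) (d + ((j : ℕ) + 1))) =
          fun j : Fin K => swapMat n ((c + 1) + (j : ℕ)) ((d + 1) + (j : ℕ)) := by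
        funext j
        rw [show c + ((j : ℕ) + 1) = (c + 1) + (j : ℕ) from by omega,
          show d + ((j : ℕ) + 1) = (d + 1) + (j : ℕ) from by omega]
      rw [he, ih (c + 1) (d + 1) (by omega) (by omega) (by omega), swapMat_eq,
        entryMat_mul n _ _ (fun s h1 h2 => by unfold shiftFun; split_ifs <;> omega)]
      exact entryMat_congr n _ _ (fun s h1 h2 => by
        simp only [Function.comp]
        unfold shiftFun swapFun
        split_ifs <;> omega)

/-- Fix `N ≥ 1`.  For 1-based indices `i, n` with `N + 1 ≤ i` and
`i ≤ n − N`, the identity `U[γ_{1,n}]^N ⬝ U[η_{i−1,n}] = U[γ_{1,i−1}]^N ⬝ U[γ_{i,n}]^N`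
holds among `n × n` permutation matrices. -/
theorem cycle_eta_identity {n : ℕ} (N : ℕ) (hN : 1 ≤ N) (i : ℕ)
    (hi : N + 1 ≤ i) (hin : i + N ≤ n) :
    (cycMat n 1 n) ^ N * etaPermMat n N (i - 1) n =
      (cycMat n 1 (i - 1)) ^ N * (cycMat n i n) ^ N := by
  have heta : etaPermMat n N (i - 1) n = entryMat n (shiftFun N (i - N) (n - N + 1)) := by
    rw [etaPermMat]
    have he : (fun j : Fin N => swapMat n (i - 1 - N + 1 + (j : ℕ)) (n - N + 1 + (j : ℕ))) =
        fun j : Fin N => swapMat n ((i - N) + (j : ℕ)) ((n - N + 1) + (j : ℕ)) := by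
      funext j
      rw [show i - 1 - N + 1 + (j : ℕ) = (i - N) + (j : ℕ) from by omega]
    rw [he, shift_prod n N (i - N) (n - N + 1) (by omega) (by omega) (by omega)]
  have h1n : cycMat n 1 n = entryMat n (cycFun 1 n) := rfl
  have h1i : cycMat n 1 (i - 1) = entryMat n (cycFun 1 (i - 1)) := rfl
  have hinn : cycMat n i n = entryMat n (cycFun i n) := rfl
  have hb1 : ∀ s, 1 ≤ s → s ≤ n → 1 ≤ cycFun 1 n s ∧ cycFun 1 n s ≤ n := by
    intro s hs hsn; unfold cycFun; split_ifs <;> omega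
  have hb2 : ∀ s, 1 ≤ s → s ≤ n → 1 ≤ cycFun 1 (i - 1) s ∧ cycFun 1 (i - 1) s ≤ n := by
    intro s hs hsn; unfold cycFun; split_ifs <;> omega
  have hb3 : ∀ s, 1 ≤ s → s ≤ n → 1 ≤ cycFun i n s ∧ cycFun i n s ≤ n := by
    intro s hs hsn; unfold cycFun; split_ifs <;> omega
  rw [h1n, h1i, hinn, heta, entryMat_pow n _ hb1, entryMat_pow n _ hb2, entryMat_pow n _ hb3,
    entryMat_mul n _ _ (fun s hs hsn => by unfold shiftFun; split_ifs <;> omega),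
    entryMat_mul n _ _ (fun s hs hsn => by
      rw [show (cycFun i n)^[N] s = _ from rfl]
      by_cases h : i ≤ s
      · rw [cycFun_iter i n N s h hsn (by omega)]; split_ifs <;> omega
      · rw [cycFun_iter_fix i n N s (by omega) (by omega)]; omega)]
  apply entryMat_congr
  intro s hs hsn
  simp only [Function.comp]
  by_cases hA : i - N ≤ s ∧ s ≤ i - 1
  · rw [show shiftFun N (i - N) (n - N + 1) s = s + (n - i + 1) from by
      unfold shiftFun; split_ifs <;> omega]
    rw [cycFun_iter 1 n N _ (by omega) (by omega) (by omega),
      cycFun_iter_fix i n N s (by omega) (by omega),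
      cycFun_iter 1 (i - 1) N s (by omega) (by omega) (by omega)]
    split_ifs <;> omega
  · by_cases hB : n - N + 1 ≤ s
    · rw [show shiftFun N (i - N) (n - N + 1) s = s - (n - i + 1) from by
        unfold shiftFun; split_ifs <;> omega]
      rw [cycFun_iter 1 n N _ (by omega) (by omega) (by omega), if_pos (by omega),
        cycFun_iter i n N s (by omega) (by omega) (by omega), if_neg (by omega),
        cycFun_iter_fix 1 (i - 1) N _ (by omega) (by omega)]
      omega
    · rw [show shiftFun N (i - N) (n - N + 1) s = s from by
        unfold shiftFun; split_ifs <;> omega]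
      by_cases hC : s < i
      · rw [cycFun_iter 1 n N s (by omega) (by omega) (by omega),
          cycFun_iter_fix i n N s (by omega) (by omega),
          cycFun_iter 1 (i - 1) N s (by omega) (by omega) (by omega)]
        split_ifs <;> omega
      · rw [cycFun_iter 1 n N s (by omega) (by omega) (by omega),
          cycFun_iter i n N s (by omega) (by omega) (by omega)]
        rw [if_pos (by omega), if_pos (by omega),
          cycFun_iter_fix 1 (i - 1) N _ (by omega) (by omega)]
end

section
/- Fix N ∈ ℕ, N ≥ 1, and n > N. Let Θ ∈ [0,1]^n satisfy: Θ_1 = 1; Θ_k = 0 for k ∈ {n−N+1,…,n}; and among any N consecutive entries of Θ at most one is nonzero. Let A be an n×n complex matrix such that A has diagonal radius at most N and, whenever Θ_k > 0, A has zero crosses at positions k, k+1, …, k+N−1. Then A · V_n(Θ) is strictly lower triangular, i.e. (A · V_n(Θ))_{i,j} = 0 whenever i ≤ j. -/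
open Matrix

/-- For `Θ ∈ [0,1]^n` (as a function of 1-based indices),
`V_n(Θ) = U[γ_{1,n}]^N ⬝ ∏_{k=N}^{n−1} u_{η_{k,n}}(Θ_{k+1})`. -/
noncomputable def Vn (n N : ℕ) (g₁ g₂ g₃ g₄ : ℝ → ℂ) (Θ : ℕ → ℝ) :
    Matrix (Fin n) (Fin n) ℂ :=
  (cycMat n 1 n) ^ N *
    (List.ofFn fun j : Fin (n - N) =>
      uEta n N g₁ g₂ g₃ g₄ (N + (j : ℕ)) n (Θ (N + (j : ℕ) + 1))).prod

section aux
variable {n : ℕ} (g₁ g₂ g₃ g₄ : ℝ → ℂ)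

lemma uSwap_zero (hg₁ : g₁ 0 = 1) (hg₄ : g₄ 0 = 1) (hg₂ : g₂ 0 = 0) (hg₃ : g₃ 0 = 0)
    (a b : ℕ) : uSwap n g₁ g₂ g₃ g₄ a b 0 = 1 := by
  ext s t
  simp only [uSwap, Matrix.of_apply, Matrix.one_apply]
  split_ifs with h1 h2 h3 h4 h5 <;>
    first
      | rfl
      | omega
      | exact absurd (Fin.ext (by omega)) (by assumption)
      | (simp_all <;>
          first
            | omega
            | exact absurd (Fin.ext (by omega)) (by assumption))

lemma mul_uSwap_apply_ne (a b : ℕ) (θ : ℝ) (M : Matrix (Fin n) (Fin n) ℂ)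
    (i c : Fin n) (hca : (c : ℕ) + 1 ≠ a) (hcb : (c : ℕ) + 1 ≠ b) :
    (M * uSwap n g₁ g₂ g₃ g₄ a b θ) i c = M i c := by
  rw [Matrix.mul_apply, Finset.sum_eq_single c]
  · have h : uSwap n g₁ g₂ g₃ g₄ a b θ c c = 1 := by
      simp only [uSwap, Matrix.of_apply]
      rw [if_neg (by tauto), if_neg (by tauto), if_neg (by tauto), if_neg (by tauto)]
      simp
    rw [h, mul_one]
  · intro s _ hs
    have h : uSwap n g₁ g₂ g₃ g₄ a b θ s c = 0 := by
      simp only [uSwap, Matrix.of_apply]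
      rw [if_neg (by tauto), if_neg (by tauto), if_neg (by tauto), if_neg (by tauto),
        if_neg hs]
    rw [h, mul_zero]
  · intro h; exact absurd (Finset.mem_univ c) h

lemma mul_uSwap_apply_a (a b : ℕ) (hab : a < b) (θ : ℝ) (M : Matrix (Fin n) (Fin n) ℂ)
    (i : Fin n) (a' b' : Fin n) (ha' : (a' : ℕ) + 1 = a) (hb' : (b' : ℕ) + 1 = b) :
    (M * uSwap n g₁ g₂ g₃ g₄ a b θ) i a' = M i a' * g₁ θ + M i b' * g₃ θ := by
  have hne : a' ≠ b' := by intro h; rw [h] at ha'; omega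
  rw [Matrix.mul_apply]
  have key : ∀ s : Fin n, M i s * uSwap n g₁ g₂ g₃ g₄ a b θ s a' =
      (if s = a' then M i a' * g₁ θ else 0) + (if s = b' then M i b' * g₃ θ else 0) := by
    intro s
    by_cases h1 : s = a'
    · subst h1
      have h : uSwap n g₁ g₂ g₃ g₄ a b θ s s = g₁ θ := by
        simp only [uSwap, Matrix.of_apply]
        rw [if_pos ⟨ha', ha'⟩]
      rw [h, if_pos rfl, if_neg hne, add_zero]
    · by_cases h2 : s = b'
      · subst h2
        have h : uSwap n g₁ g₂ g₃ g₄ a b θ s a' = g₃ θ := by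
          simp only [uSwap, Matrix.of_apply]
          rw [if_neg (by omega), if_neg (by omega), if_pos ⟨hb', ha'⟩]
        rw [h, if_neg h1, if_pos rfl, zero_add]
      · have hsa : (s : ℕ) + 1 ≠ a := fun h => h1 (Fin.ext (by omega))
        have hsb : (s : ℕ) + 1 ≠ b := fun h => h2 (Fin.ext (by omega))
        have h : uSwap n g₁ g₂ g₃ g₄ a b θ s a' = 0 := by
          simp only [uSwap, Matrix.of_apply]
          rw [if_neg (by tauto), if_neg (by tauto), if_neg (by tauto), if_neg (by tauto),
            if_neg h1]
        rw [h, if_neg h1, if_neg h2, mul_zero, add_zero]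
  rw [Finset.sum_congr rfl fun s _ => key s, Finset.sum_add_distrib,
    Finset.sum_ite_eq' Finset.univ a', Finset.sum_ite_eq' Finset.univ b']
  simp

lemma mul_uSwap_apply_b (a b : ℕ) (hab : a < b) (θ : ℝ) (M : Matrix (Fin n) (Fin n) ℂ)
    (i : Fin n) (a' b' : Fin n) (ha' : (a' : ℕ) + 1 = a) (hb' : (b' : ℕ) + 1 = b) :
    (M * uSwap n g₁ g₂ g₃ g₄ a b θ) i b' = M i a' * g₂ θ + M i b' * g₄ θ := by
  have hne : a' ≠ b' := by intro h; rw [h] at ha'; omega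
  rw [Matrix.mul_apply]
  have key : ∀ s : Fin n, M i s * uSwap n g₁ g₂ g₃ g₄ a b θ s b' =
      (if s = a' then M i a' * g₂ θ else 0) + (if s = b' then M i b' * g₄ θ else 0) := by
    intro s
    by_cases h1 : s = a'
    · subst h1
      have h : uSwap n g₁ g₂ g₃ g₄ a b θ s b' = g₂ θ := by
        simp only [uSwap, Matrix.of_apply]
        rw [if_neg (by omega), if_pos ⟨ha', hb'⟩]
      rw [h, if_pos rfl, if_neg hne, add_zero]
    · by_cases h2 : s = b'
      · subst h2
        have h : uSwap n g₁ g₂ g₃ g₄ a b θ s s = g₄ θ := by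
          simp only [uSwap, Matrix.of_apply]
          rw [if_neg (by omega), if_neg (by omega), if_neg (by omega), if_pos ⟨hb', hb'⟩]
        rw [h, if_neg h1, if_pos rfl, zero_add]
      · have hsa : (s : ℕ) + 1 ≠ a := fun h => h1 (Fin.ext (by omega))
        have hsb : (s : ℕ) + 1 ≠ b := fun h => h2 (Fin.ext (by omega))
        have h : uSwap n g₁ g₂ g₃ g₄ a b θ s b' = 0 := by
          simp only [uSwap, Matrix.of_apply]
          rw [if_neg (by tauto), if_neg (by tauto), if_neg (by tauto), if_neg (by tauto),
            if_neg h2]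
        rw [h, if_neg h1, if_neg h2, mul_zero, add_zero]
  rw [Finset.sum_congr rfl fun s _ => key s, Finset.sum_add_distrib,
    Finset.sum_ite_eq' Finset.univ a', Finset.sum_ite_eq' Finset.univ b']
  simp

end aux

section part2
variable {n : ℕ} (g₁ g₂ g₃ g₄ : ℝ → ℂ)

lemma lemA (θ : ℝ) :
    ∀ (J α β : ℕ) (M : Matrix (Fin n) (Fin n) ℂ),
      1 ≤ α → α + J ≤ β → β + J ≤ n + 1 →
      (∀ i j : Fin n, (i : ℕ) ≤ (j : ℕ) → M i j = 0) →
      (∀ j, j < J → ∀ c : Fin n, (c : ℕ) + 1 = α + j → ∀ i, M i c = 0) →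
      (∀ i j : Fin n, (i : ℕ) ≤ (j : ℕ) →
        (M * (List.ofFn fun j : Fin J =>
          uSwap n g₁ g₂ g₃ g₄ (α + (j : ℕ)) (β + (j : ℕ)) θ).prod) i j = 0) ∧
      (∀ c : Fin n, ((c : ℕ) + 1 < α ∨ (α + J ≤ (c : ℕ) + 1 ∧ (c : ℕ) + 1 < β)) → ∀ i,
        (M * (List.ofFn fun j : Fin J =>
          uSwap n g₁ g₂ g₃ g₄ (α + (j : ℕ)) (β + (j : ℕ)) θ).prod) i c = M i c) := by
  intro J
  induction J with
  | zero =>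
    intro α β M _ _ _ h1 _
    simp only [List.ofFn_zero, List.prod_nil, mul_one]
    exact ⟨h1, by intro c _ i; trivial⟩
  | succ J ih =>
    intro α β M hα hαβ hβn h1 h2
    have htail : (List.ofFn fun j : Fin (J + 1) =>
        uSwap n g₁ g₂ g₃ g₄ (α + (j : ℕ)) (β + (j : ℕ)) θ) =
        uSwap n g₁ g₂ g₃ g₄ α β θ ::
          (List.ofFn fun j : Fin J =>
            uSwap n g₁ g₂ g₃ g₄ ((α + 1) + (j : ℕ)) ((β + 1) + (j : ℕ)) θ) := by
      have hfun : ∀ j : Fin J, uSwap n g₁ g₂ g₃ g₄ (α + ((j : ℕ) + 1)) (β + ((j : ℕ) + 1)) θ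
          = uSwap n g₁ g₂ g₃ g₄ ((α + 1) + (j : ℕ)) ((β + 1) + (j : ℕ)) θ := by
        intro j
        rw [show α + ((j : ℕ) + 1) = (α + 1) + (j : ℕ) by ring,
          show β + ((j : ℕ) + 1) = (β + 1) + (j : ℕ) by ring]
      rw [List.ofFn_succ]
      simp only [Fin.val_succ, Fin.val_zero, add_zero]
      exact congrArg₂ List.cons rfl (congrArg List.ofFn (funext hfun))
    rw [htail, List.prod_cons, ← Matrix.mul_assoc]
    have ha'lt : α - 1 < n := by omega
    have hb'lt : β - 1 < n := by omega
    set a' : Fin n := ⟨α - 1, ha'lt⟩ with ha'def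
    set b' : Fin n := ⟨β - 1, hb'lt⟩ with hb'def
    have hav : (a' : ℕ) = α - 1 := rfl
    have hbv : (b' : ℕ) = β - 1 := rfl
    have ha' : (a' : ℕ) + 1 = α := by omega
    have hb' : (b' : ℕ) + 1 = β := by omega
    have hab : α < β := by omega
    have hP1 : ∀ i j : Fin n, (i : ℕ) ≤ (j : ℕ) →
        (M * uSwap n g₁ g₂ g₃ g₄ α β θ) i j = 0 := by
      intro i c hic
      by_cases h1c : (c : ℕ) + 1 = α
      · have hc : c = a' := Fin.ext (by omega)
        rw [hc, mul_uSwap_apply_a g₁ g₂ g₃ g₄ α β hab θ M i a' b' ha' hb']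
        have hcv : (c : ℕ) = α - 1 := by omega
        rw [h2 0 (by omega) a' (by omega) i, h1 i b' (by omega)]
        ring
      · by_cases h2c : (c : ℕ) + 1 = β
        · have hc : c = b' := Fin.ext (by omega)
          have hcv : (c : ℕ) = β - 1 := by omega
          rw [hc, mul_uSwap_apply_b g₁ g₂ g₃ g₄ α β hab θ M i a' b' ha' hb']
          rw [h2 0 (by omega) a' (by omega) i, h1 i b' (by omega)]
          ring
        · rw [mul_uSwap_apply_ne g₁ g₂ g₃ g₄ α β θ M i c h1c h2c]
          exact h1 i c hic
    have hZ : ∀ j, j < J → ∀ c : Fin n, (c : ℕ) + 1 = (α + 1) + j → ∀ i,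
        (M * uSwap n g₁ g₂ g₃ g₄ α β θ) i c = 0 := by
      intro j hj c hc i
      rw [mul_uSwap_apply_ne g₁ g₂ g₃ g₄ α β θ M i c (by omega) (by omega)]
      exact h2 (j + 1) (by omega) c (by omega) i
    obtain ⟨ihP, ihU⟩ := ih (α + 1) (β + 1) (M * uSwap n g₁ g₂ g₃ g₄ α β θ)
      (by omega) (by omega) (by omega) hP1 hZ
    refine ⟨ihP, ?_⟩
    intro c hc i
    rw [ihU c (by omega) i, mul_uSwap_apply_ne g₁ g₂ g₃ g₄ α β θ M i c (by omega) (by omega)]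

end part2

section part3
variable {n : ℕ} (g₁ g₂ g₃ g₄ : ℝ → ℂ)

lemma uEta_zero (hg₁ : g₁ 0 = 1) (hg₄ : g₄ 0 = 1) (hg₂ : g₂ 0 = 0) (hg₃ : g₃ 0 = 0)
    (N a b : ℕ) : uEta n N g₁ g₂ g₃ g₄ a b 0 = 1 := by
  unfold uEta
  apply List.prod_eq_one
  intro x hx
  rw [List.mem_ofFn] at hx
  obtain ⟨j, rfl⟩ := hx
  exact uSwap_zero g₁ g₂ g₃ g₄ hg₁ hg₄ hg₂ hg₃ _ _

lemma mul_cycMat_apply (hn : 0 < n) (M : Matrix (Fin n) (Fin n) ℂ) (i t : Fin n) :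
    (M * cycMat n 1 n) i t = M i ⟨((t : ℕ) + 1) % n, Nat.mod_lt _ hn⟩ := by
  have hcf : cycFun 1 n ((t : ℕ) + 1) = ((t : ℕ) + 1) % n + 1 := by
    unfold cycFun
    have htlt := t.isLt
    by_cases h : (t : ℕ) + 1 < n
    · rw [if_pos ⟨by omega, h⟩, Nat.mod_eq_of_lt h]
    · have ht : (t : ℕ) + 1 = n := by omega
      rw [if_neg (by omega), if_pos ht, ht, Nat.mod_self]
  have key : ∀ s : Fin n, cycMat n 1 n s t =
      if s = (⟨((t : ℕ) + 1) % n, Nat.mod_lt _ hn⟩ : Fin n) then 1 else 0 := by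
    intro s
    simp only [cycMat, Matrix.of_apply, hcf]
    by_cases h : s = (⟨((t : ℕ) + 1) % n, Nat.mod_lt _ hn⟩ : Fin n)
    · rw [if_pos (by rw [h]), if_pos h]
    · refine (if_neg ?_).trans (if_neg h).symm
      intro hh
      exact h (Fin.ext (show (s : ℕ) = ((t : ℕ) + 1) % n by omega))
  rw [Matrix.mul_apply, Finset.sum_congr rfl fun s _ => by rw [key s]]
  simp only [mul_ite, mul_one, mul_zero]
  rw [Finset.sum_ite_eq' Finset.univ _ (fun s => M i s)]
  simp

lemma mul_cycMat_pow (hn : 0 < n) (M : Matrix (Fin n) (Fin n) ℂ) (m : ℕ) :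
    ∀ (i t : Fin n), (M * (cycMat n 1 n) ^ m) i t =
      M i ⟨((t : ℕ) + m) % n, Nat.mod_lt _ hn⟩ := by
  induction m with
  | zero =>
    intro i t
    rw [pow_zero, mul_one]
    congr 1
    exact Fin.ext (by simp [Nat.mod_eq_of_lt t.isLt])
  | succ m ihm =>
    intro i t
    rw [pow_succ, ← Matrix.mul_assoc, mul_cycMat_apply hn, ihm]
    congr 1
    apply Fin.ext
    show ((((t : ℕ) + 1) % n) + m) % n = ((t : ℕ) + (m + 1)) % n
    rw [Nat.mod_add_mod]
    congr 1
    omega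

end part3

/-- Fix `N ≥ 1` and `n > N`.  Let `Θ ∈ [0,1]^n` (1-based indices) satisfy
`Θ 1 = 1`, `Θ p = 0` for `p ∈ {n−N+1,…,n}`, and have at most one nonzero among any `N`
consecutive entries.  Let `A` be an `n×n` complex matrix with diagonal radius at most `N`
such that whenever `Θ p > 0`, `A` has zero crosses at the (1-based) positions
`p, p+1, …, p+N−1`.  Then `A ⬝ V_n(Θ)` is strictly lower triangular. -/
theorem mul_Vn_strictly_lower_triangular {n N : ℕ} (hN : 1 ≤ N) (hn : N < n)
    (g₁ g₂ g₃ g₄ : ℝ → ℂ)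
    (hg₁ : g₁ 0 = 1) (hg₄ : g₄ 0 = 1) (hg₂ : g₂ 0 = 0) (hg₃ : g₃ 0 = 0)
    (hunitary : ∀ a b : ℕ, 1 ≤ a → a < b → b ≤ n → ∀ θ ∈ Set.Icc (0 : ℝ) 1,
      uSwap n g₁ g₂ g₃ g₄ a b θ ∈ Matrix.unitaryGroup (Fin n) ℂ)
    (Θ : ℕ → ℝ) (hΘmem : ∀ p, 1 ≤ p → p ≤ n → Θ p ∈ Set.Icc (0 : ℝ) 1)
    (hΘ1 : Θ 1 = 1)
    (hΘtail : ∀ p, n - N + 1 ≤ p → p ≤ n → Θ p = 0)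
    (hΘsparse : ∀ p q, 1 ≤ p → p < q → q < p + N → q ≤ n → Θ p ≠ 0 → Θ q = 0)
    (A : Matrix (Fin n) (Fin n) ℂ)
    (hrad : DiagRadiusLE A N)
    (hcross : ∀ p, 1 ≤ p → p ≤ n → 0 < Θ p →
      ∀ i : Fin n, p ≤ (i : ℕ) + 1 → (i : ℕ) + 1 < p + N → HasZeroCross A i) :
    ∀ i j : Fin n, (i : ℕ) ≤ (j : ℕ) → (A * Vn n N g₁ g₂ g₃ g₄ Θ) i j = 0 := by
  have hn0 : 0 < n := by omega
  have hB1 : ∀ i j : Fin n, (i : ℕ) ≤ (j : ℕ) → (A * (cycMat n 1 n) ^ N) i j = 0 := by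
    intro i j hij
    rw [mul_cycMat_pow hn0]
    have hjlt := j.isLt
    by_cases h : (j : ℕ) + N < n
    · apply hrad
      have hq : ((j : ℕ) + N) % n = (j : ℕ) + N := Nat.mod_eq_of_lt h
      have hz : ((⟨((j : ℕ) + N) % n, Nat.mod_lt _ hn0⟩ : Fin n) : ℤ) =
          ((j : ℕ) : ℤ) + (N : ℤ) := by
        show ((((j : ℕ) + N) % n : ℕ) : ℤ) = ((j : ℕ) : ℤ) + (N : ℤ)
        rw [hq]; push_cast; ring
      rw [hz, le_abs]
      right
      omega
    · have hq : ((j : ℕ) + N) % n = (j : ℕ) + N - n := by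
        rw [Nat.mod_eq_sub_mod (by omega),
          Nat.mod_eq_of_lt (by omega : (j : ℕ) + N - n < n)]
      have hΘ1pos : (0 : ℝ) < Θ 1 := by rw [hΘ1]; norm_num
      refine (hcross 1 le_rfl (by omega) hΘ1pos
        ⟨((j : ℕ) + N) % n, Nat.mod_lt _ hn0⟩ (by omega) ?_).2 i
      show ((j : ℕ) + N) % n + 1 < 1 + N
      omega
  have hB2 : ∀ (k' j' : ℕ), N ≤ k' → k' < n → j' < N → Θ (k' + 1) ≠ 0 →
      ∀ c : Fin n, (c : ℕ) + N = k' + j' → ∀ i : Fin n,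
        (A * (cycMat n 1 n) ^ N) i c = 0 := by
    intro k' j' hk' hk'n hj' hθ' c hc i
    have hk'N : k' + 1 + N ≤ n := by
      by_contra h
      exact hθ' (hΘtail (k' + 1) (by omega) (by omega))
    rw [mul_cycMat_pow hn0]
    have hlt : (c : ℕ) + N < n := by omega
    have hpos : 0 < Θ (k' + 1) :=
      lt_of_le_of_ne (hΘmem (k' + 1) (by omega) (by omega)).1 (Ne.symm hθ')
    refine (hcross (k' + 1) (by omega) (by omega) hpos
      ⟨((c : ℕ) + N) % n, Nat.mod_lt _ hn0⟩ ?_ ?_).2 i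
    · show k' + 1 ≤ ((c : ℕ) + N) % n + 1
      rw [Nat.mod_eq_of_lt hlt]; omega
    · show ((c : ℕ) + N) % n + 1 < k' + 1 + N
      rw [Nat.mod_eq_of_lt hlt]; omega
  have lemB : ∀ (m k₀ : ℕ), N ≤ k₀ → k₀ + m ≤ n →
      ∀ M : Matrix (Fin n) (Fin n) ℂ,
        (∀ i j : Fin n, (i : ℕ) ≤ (j : ℕ) → M i j = 0) →
        (∀ (k' j' : ℕ), k₀ ≤ k' → k' < n → j' < N → Θ (k' + 1) ≠ 0 →
          ∀ c : Fin n, (c : ℕ) + N = k' + j' → ∀ i : Fin n, M i c = 0) →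
        ∀ i j : Fin n, (i : ℕ) ≤ (j : ℕ) →
          (M * (List.ofFn fun j : Fin m =>
            uEta n N g₁ g₂ g₃ g₄ (k₀ + (j : ℕ)) n (Θ (k₀ + (j : ℕ) + 1))).prod) i j = 0 := by
    intro m
    induction m with
    | zero =>
      intro k₀ _ _ M hM1 _ i j hij
      simpa using hM1 i j hij
    | succ m ih =>
      intro k₀ hk₀ hk₀m M hM1 hM2 i j hij
      have htail : (List.ofFn fun j : Fin (m + 1) =>
          uEta n N g₁ g₂ g₃ g₄ (k₀ + (j : ℕ)) n (Θ (k₀ + (j : ℕ) + 1))) =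
          uEta n N g₁ g₂ g₃ g₄ k₀ n (Θ (k₀ + 1)) ::
            (List.ofFn fun j : Fin m =>
              uEta n N g₁ g₂ g₃ g₄ ((k₀ + 1) + (j : ℕ)) n (Θ ((k₀ + 1) + (j : ℕ) + 1))) := by
        have hfun : ∀ j : Fin m,
            uEta n N g₁ g₂ g₃ g₄ (k₀ + ((j : ℕ) + 1)) n (Θ (k₀ + ((j : ℕ) + 1) + 1))
            = uEta n N g₁ g₂ g₃ g₄ ((k₀ + 1) + (j : ℕ)) n (Θ ((k₀ + 1) + (j : ℕ) + 1)) := by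
          intro j
          rw [show k₀ + ((j : ℕ) + 1) = (k₀ + 1) + (j : ℕ) by ring]
        rw [List.ofFn_succ]
        simp only [Fin.val_succ, Fin.val_zero, add_zero]
        exact congrArg₂ List.cons rfl (congrArg List.ofFn (funext hfun))
      rw [htail, List.prod_cons, ← Matrix.mul_assoc]
      by_cases hθ0 : Θ (k₀ + 1) = 0
      · rw [hθ0, uEta_zero g₁ g₂ g₃ g₄ hg₁ hg₄ hg₂ hg₃ N k₀ n, mul_one]
        exact ih (k₀ + 1) (by omega) (by omega) M hM1
          (fun k' j' hk' => hM2 k' j' (by omega)) i j hij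
      · have hkn : k₀ + 1 + N ≤ n := by
          by_contra h
          exact hθ0 (hΘtail (k₀ + 1) (by omega) (by omega))
        have heta : uEta n N g₁ g₂ g₃ g₄ k₀ n (Θ (k₀ + 1)) =
            (List.ofFn fun j : Fin N =>
              uSwap n g₁ g₂ g₃ g₄ (k₀ - N + 1 + (j : ℕ)) (n - N + 1 + (j : ℕ))
                (Θ (k₀ + 1))).prod := rfl
        obtain ⟨hP1', hUn'⟩ := lemA g₁ g₂ g₃ g₄ (Θ (k₀ + 1)) N (k₀ - N + 1) (n - N + 1) M
          (by omega) (by omega) (by omega) hM1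
          (fun j hj c hc i => hM2 k₀ j le_rfl (by omega) hj hθ0 c (by omega) i)
        rw [heta]
        apply ih (k₀ + 1) (by omega) (by omega) _ hP1' _ i j hij
        intro k' j' hk' hk'n hj' hθ' c hc i'
        have hs : k₀ + N ≤ k' := by
          by_contra h
          exact hθ' (hΘsparse (k₀ + 1) (k' + 1) (by omega) (by omega) (by omega)
            (by omega) hθ0)
        have hk'N : k' + 1 + N ≤ n := by
          by_contra h
          exact hθ' (hΘtail (k' + 1) (by omega) (by omega))
        rw [hUn' c (Or.inr ⟨by omega, by omega⟩) i']
        exact hM2 k' j' (by omega) hk'n hj' hθ' c hc i'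
  intro i j hij
  show (A * ((cycMat n 1 n) ^ N *
    (List.ofFn fun j : Fin (n - N) =>
      uEta n N g₁ g₂ g₃ g₄ (N + (j : ℕ)) n (Θ (N + (j : ℕ) + 1))).prod)) i j = 0
  rw [← Matrix.mul_assoc]
  exact lemB (n - N) N le_rfl (by omega) _ hB1 hB2 i j hij
end

section
/- Let X be a compact topological space, let f : X → M_n(ℂ) be continuous, and let ε > 0. Then there exists a continuous f′ : X → M_n(ℂ) such that: (i) ‖f(x) − f′(x)‖ < ε for every x ∈ X; (ii) for all indices s, t and all x ∈ X, if f(x)_{s,t} = 0 then f′(x)_{s,t} = 0; and (iii) for every pair of indices (s,t) there is an open set U_{s,t} ⊆ X containing {x ∈ X : f(x)_{s,t} = 0} such that f′(x)_{s,t} = 0 for all x ∈ U_{s,t}. -/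
open Matrix

attribute [local instance] Matrix.normedAddCommGroup

noncomputable def cutFun (δ : ℝ) (z : ℂ) : ℂ := (max 0 (‖z‖ - δ) / ‖z‖ : ℝ) • z

lemma cutFun_eq_zero {δ : ℝ} {z : ℂ} (h : ‖z‖ ≤ δ) : cutFun δ z = 0 := by
  unfold cutFun
  rw [max_eq_left (by linarith)]
  simp

lemma cutFun_dist {δ : ℝ} (hδ : 0 ≤ δ) (z : ℂ) : ‖z - cutFun δ z‖ ≤ δ := by
  rcases le_or_gt ‖z‖ δ with h | h
  · rw [cutFun_eq_zero h, sub_zero]; exact h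
  · have hz : ‖z‖ ≠ 0 := (hδ.trans_lt h).ne'
    unfold cutFun
    rw [max_eq_right (by linarith)]
    have : z - ((‖z‖ - δ) / ‖z‖ : ℝ) • z = ((1 - (‖z‖ - δ) / ‖z‖ : ℝ)) • z := by
      rw [sub_smul, one_smul]
    rw [this, norm_smul]
    have h1 : (1 - (‖z‖ - δ) / ‖z‖ : ℝ) = δ / ‖z‖ := by
      rw [sub_div, div_self hz]; ring
    rw [h1]
    have : ‖(δ / ‖z‖ : ℝ)‖ = δ / ‖z‖ := by
      rw [Real.norm_eq_abs, abs_of_nonneg (by positivity)]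
    rw [this, div_mul_cancel₀ _ hz]

lemma continuous_cutFun {δ : ℝ} (hδ : 0 < δ) : Continuous (cutFun δ) := by
  rw [continuous_iff_continuousAt]
  intro z
  rcases lt_or_ge ‖z‖ δ with h | h
  · have hmem : {w : ℂ | ‖w‖ < δ} ∈ nhds z :=
      (isOpen_lt continuous_norm continuous_const).mem_nhds h
    have hev : (fun _ : ℂ => (0 : ℂ)) =ᶠ[nhds z] cutFun δ := by
      filter_upwards [hmem] with w hw
      exact (cutFun_eq_zero hw.le).symm
    exact continuousAt_const.congr hev
  · have hz : ‖z‖ ≠ 0 := (hδ.trans_le h).ne'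
    exact ContinuousAt.smul
      (((continuous_const.max (continuous_norm.sub continuous_const)).continuousAt).div
        continuous_norm.continuousAt hz) continuousAt_id

/-- Let `X` be a compact topological space, `f : X → M_n(ℂ)` continuous and
`ε > 0`.  Then there is a continuous `f' : X → M_n(ℂ)` with `‖f x − f' x‖ < ε` for every
`x`, such that `f' x s t = 0` whenever `f x s t = 0`, and such that for every entry
`(s, t)` there is an open set `U ⊆ X` containing `{x : f x s t = 0}` on which the
`(s, t)` entry of `f'` vanishes identically. -/
theorem entrywise_flattening {X : Type*} [TopologicalSpace X] [CompactSpace X]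
    {n : ℕ} (f : X → Matrix (Fin n) (Fin n) ℂ) (hf : Continuous f)
    (ε : ℝ) (hε : 0 < ε) :
    ∃ f' : X → Matrix (Fin n) (Fin n) ℂ,
      Continuous f' ∧
      (∀ x, ‖f x - f' x‖ < ε) ∧
      (∀ (s t : Fin n) (x : X), f x s t = 0 → f' x s t = 0) ∧
      (∀ s t : Fin n, ∃ U : Set X, IsOpen U ∧ {x : X | f x s t = 0} ⊆ U ∧
        ∀ x ∈ U, f' x s t = 0) := by
  set δ : ℝ := ε / 2 with hδdef
  have hδ : 0 < δ := by positivity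
  refine ⟨fun x => Matrix.of fun s t => cutFun δ (f x s t), ?_, ?_, ?_, ?_⟩
  · apply continuous_matrix
    intro i j
    exact (continuous_cutFun hδ).comp (hf.matrix_elem i j)
  · intro x
    have hle : ‖f x - Matrix.of fun s t => cutFun δ (f x s t)‖ ≤ δ := by
      rw [Matrix.norm_le_iff hδ.le]
      intro i j
      simpa [Matrix.sub_apply] using cutFun_dist hδ.le (f x i j)
    calc ‖f x - Matrix.of fun s t => cutFun δ (f x s t)‖ ≤ δ := hle
      _ < ε := by linarith
  · intro s t x hx
    simp [hx, cutFun_eq_zero (by simp [hδ.le] : ‖(0:ℂ)‖ ≤ δ)]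
  · intro s t
    refine ⟨{x : X | ‖f x s t‖ < δ}, isOpen_lt ((hf.matrix_elem s t).norm) continuous_const,
      ?_, ?_⟩
    · intro x hx
      simp only [Set.mem_setOf_eq] at hx ⊢
      rw [hx]; simpa using hδ
    · intro x hx
      exact cutFun_eq_zero hx.le
end
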